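/- arXiv:1409.8523 — 5 statements merged into one kernel-verified Lean document; each statement's English description precedes it below -/
import Mathlib

section
/- Let t : E → F be an essentially defined operator between Hilbert C*-modules over A. Then the domain D(t*) of the adjoint is an essential submodule of F if and only if t is orthogonally closable, i.e. Graph(t)^⊥⊥ is the graph of an operator from E to F. -/
open scoped RightActions Pointwise

noncomputable section

namespace CStarReg

variable (A : Type*)

/-- The orthogonal complement of a subset of a Hilbert C*-module with respect to the
`A`-valued inner product. -/
def ortho {E : Type*} [Zero A] [Inner A E] (S : Set E) : Set E :=
  {x | ∀ y ∈ S, (inner A x y : A) = 0}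

/-- A subset of a Hilbert C*-module is *essential* if its orthogonal complement is trivial. -/
def IsEssential {E : Type*} [Zero A] [Zero E] [Inner A E] (S : Set E) : Prop :=
  ortho A S = {0}

/-- A subset is *orthogonally closed* if it coincides with its double orthogonal complement. -/
def IsOrthoClosedSet {E : Type*} [Zero A] [Inner A E] (S : Set E) : Prop :=
  ortho A (ortho A S) = S

/-- The `A`-valued inner product on the direct sum `E ⊕ F` of two Hilbert C*-modules. -/
instance prodInner {E F : Type*} [Add A] [Inner A E] [Inner A F] : Inner A (E × F) :=
  ⟨fun p q => (inner A p.1 q.1 : A) + (inner A p.2 q.2 : A)⟩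

/-- A (not necessarily densely or essentially defined) `ℂ`-linear and `A`-linear operator
from `E` to `F`, encoded by its graph. -/
structure Unbounded (E F : Type*) [AddCommGroup E] [AddCommGroup F]
    [Module ℂ E] [Module ℂ F] [SMul Aᵐᵒᵖ E] [SMul Aᵐᵒᵖ F] where
  graph : Set (E × F)
  zero_mem : ((0 : E), (0 : F)) ∈ graph
  add_mem : ∀ ⦃p q : E × F⦄, p ∈ graph → q ∈ graph → p + q ∈ graph
  smul_mem : ∀ (c : ℂ) ⦃p : E × F⦄, p ∈ graph → c • p ∈ graph
  smulA_mem : ∀ (a : A) ⦃p : E × F⦄, p ∈ graph → (p.1 <• a, p.2 <• a) ∈ graph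
  single_valued : ∀ ⦃y : F⦄, ((0 : E), y) ∈ graph → y = 0

/-- An adjointable (everywhere defined, with everywhere defined adjoint) operator between
Hilbert C*-modules. -/
structure Adjointable (E F : Type*) [Inner A E] [Inner A F] where
  toFun : E → F
  adjFun : F → E
  adjoint_eq : ∀ (x : E) (y : F), (inner A (toFun x) y : A) = inner A x (adjFun y)

section Operators

variable {A}
variable {E F G H : Type*} [AddCommGroup E] [AddCommGroup F] [AddCommGroup G] [AddCommGroup H]
  [Module ℂ E] [Module ℂ F] [Module ℂ G] [Module ℂ H]
  [SMul Aᵐᵒᵖ E] [SMul Aᵐᵒᵖ F] [SMul Aᵐᵒᵖ G] [SMul Aᵐᵒᵖ H]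

namespace Unbounded

/-- The domain of an operator. -/
def dom (t : Unbounded A E F) : Set E := Prod.fst '' t.graph

/-- The range of an operator. -/
def ran (t : Unbounded A E F) : Set F := Prod.snd '' t.graph

/-- The null space of an operator. -/
def ker (t : Unbounded A E F) : Set E := {x | (x, (0 : F)) ∈ t.graph}

/-- `t ⊆ s`, i.e. `s` extends `t`. -/
def le (t s : Unbounded A E F) : Prop := t.graph ⊆ s.graph

end Unbounded

variable (A)

section WithInner

variable [Inner A E] [Inner A F] [Inner A G] [Inner A H] [Add A]

/-- The graph of the adjoint: `(y, z)` belongs to `adjSet A g` iff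
`⟪t x, y⟫ = ⟪x, z⟫` for all `(x, t x) ∈ g`. -/
def adjSet (g : Set (E × F)) : Set (F × E) :=
  {q | ∀ p ∈ g, (inner A p.2 q.1 : A) = inner A p.1 q.2}

end WithInner

/-- Composition of graphs. -/
def compSet (g₂ : Set (F × G)) (g₁ : Set (E × F)) : Set (E × G) :=
  {p | ∃ y, (p.1, y) ∈ g₁ ∧ (y, p.2) ∈ g₂}

/-- The graph of `1 + s` where `g` is the graph of `s`. -/
def oneAddSet (g : Set (E × E)) : Set (E × E) :=
  {p | ∃ y, (p.1, y) ∈ g ∧ p.2 = p.1 + y}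

variable {A}

namespace Unbounded

variable [Inner A E] [Inner A F] [Add A] [Zero A]

/-- The graph of the adjoint operator `t*`. -/
def adjGraph (t : Unbounded A E F) : Set (F × E) := adjSet A t.graph

/-- The domain of the adjoint operator `t*`. -/
def adjDom (t : Unbounded A E F) : Set F := Prod.fst '' (adjSet A t.graph)

/-- `s` is the adjoint of `t`. -/
def IsAdjointOf (s : Unbounded A F E) (t : Unbounded A E F) : Prop :=
  s.graph = adjSet A t.graph

/-- `t` is essentially defined, i.e. its domain has trivial orthogonal complement. -/
def EssentiallyDefined (t : Unbounded A E F) : Prop := IsEssential A t.dom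

/-- `t` is orthogonally closed, i.e. its graph coincides with its double orthogonal
complement in `E ⊕ F`. -/
def OrthoClosed (t : Unbounded A E F) : Prop := ortho A (ortho A t.graph) = t.graph

/-- `t` is graph regular: essentially defined, orthogonally closed, and its graph is
orthogonally complemented in `E ⊕ F`. -/
def GraphRegular (t : Unbounded A E F) : Prop :=
  t.EssentiallyDefined ∧ t.OrthoClosed ∧ t.graph + ortho A t.graph = Set.univ

/-- The graph of `t* t`. -/
def adjCompGraph (t : Unbounded A E F) : Set (E × E) := compSet (adjSet A t.graph) t.graph

/-- The graph of `t t*`. -/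
def compAdjGraph (t : Unbounded A E F) : Set (F × F) := compSet t.graph (adjSet A t.graph)

/-- `a = (1 + t* t)⁻¹` as an everywhere defined map. -/
def IsAt (t : Unbounded A E F) (a : E → E) : Prop :=
  ∀ x : E, (a x, x) ∈ oneAddSet t.adjCompGraph

/-- `a⋆ = (1 + t t*)⁻¹` as an everywhere defined map. -/
def IsAtStar (t : Unbounded A E F) (a : F → F) : Prop :=
  ∀ y : F, (a y, y) ∈ oneAddSet t.compAdjGraph

/-- `b = t ∘ a` as an everywhere defined map (where `a = (1 + t* t)⁻¹`, this is `b_t`). -/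
def IsBt (t : Unbounded A E F) (a : E → E) (b : E → F) : Prop :=
  ∀ x : E, (a x, b x) ∈ t.graph

end Unbounded

namespace Adjointable

variable [Inner A E] [Inner A F]

/-- Self-adjointness of an adjointable operator. -/
def IsSelfAdj (a : Adjointable A E E) : Prop := a.adjFun = a.toFun

/-- Positivity of an adjointable operator: `⟪x, a x⟫ ≥ 0` for all `x`. -/
def Nonneg [LE A] [Zero A] (a : Adjointable A E E) : Prop :=
  ∀ x : E, (0 : A) ≤ inner A x (a.toFun x)

/-- `r` is the positive square root of `a` in the C*-algebra `Adj(E)`. -/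
def IsPosSqrtOf [LE A] [Zero A] (r a : Adjointable A E E) : Prop :=
  r.Nonneg ∧ r.adjFun = r.toFun ∧ ∀ x : E, r.toFun (r.toFun x) = a.toFun x

/-- The kernel of an adjointable operator is trivial. -/
def KerTrivial (a : Adjointable A E F) : Prop := ∀ x : E, a.toFun x = 0 → x = 0

end Adjointable

variable (A)

/-- The graph of the projection onto a submodule `G` (with domain `G ⊕ G^⊥`). -/
def projSet [Zero A] [Inner A E] (G : Set E) : Set (E × E) :=
  {p | ∃ x ∈ G, ∃ y ∈ ortho A G, p = (x + y, x)}

/-- The restriction of a graph to those points whose first component lies in `D`. -/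
def restrictSet (g : Set (E × F)) (D : Set E) : Set (E × F) := {p ∈ g | p.1 ∈ D}

end Operators

end CStarReg

/-- The December 2024 Mathlib `CStarModule` (right module, via `Aᵐᵒᵖ`), which Mathlib has
since replaced by a left-module convention. -/
class RightCStarModule (A E : Type*) [NonUnitalSemiring A] [StarRing A] [Module ℂ A]
    [AddCommGroup E] [Module ℂ E] [PartialOrder A] [SMul Aᵐᵒᵖ E] [Norm A] [Norm E]
    extends Inner A E where
  inner_add_right {x} {y} {z} : inner x (y + z) = inner x y + inner x z
  inner_self_nonneg {x} : 0 ≤ inner x x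
  inner_self {x} : inner x x = 0 ↔ x = 0
  inner_op_smul_right {a : A} {x y : E} : inner x (y <• a) = inner x y * a
  inner_smul_right_complex {z : ℂ} {x} {y} : inner x (z • y) = z • inner x y
  star_inner x y : star (inner x y) = inner y x
  norm_eq_sqrt_norm_inner_self x : ‖x‖ = √‖inner x x‖

namespace RightCStarModule

variable {A : Type*} [NonUnitalCStarAlgebra A] [PartialOrder A] [StarOrderedRing A]
variable {E : Type*} [NormedAddCommGroup E] [Module ℂ E] [SMul Aᵐᵒᵖ E] [RightCStarModule A E]

@[simp] lemma inner_zero_right (x : E) : inner A x (0 : E) = 0 := by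
  have h := RightCStarModule.inner_add_right (A := A) (x := x) (y := (0 : E)) (z := 0)
  simpa using h

@[simp] lemma inner_zero_left (y : E) : inner A (0 : E) y = 0 := by
  rw [← RightCStarModule.star_inner y, RightCStarModule.inner_zero_right, star_zero]

lemma inner_add_left (x y z : E) : inner A (x + y) z = inner A x z + inner A y z := by
  rw [← RightCStarModule.star_inner z, RightCStarModule.inner_add_right, star_add,
    RightCStarModule.star_inner, RightCStarModule.star_inner]

@[simp] lemma inner_neg_right (x y : E) : inner A x (-y) = - inner A x y := by
  rw [eq_neg_iff_add_eq_zero, ← RightCStarModule.inner_add_right, neg_add_cancel,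
    RightCStarModule.inner_zero_right]

@[simp] lemma inner_neg_left (x y : E) : inner A (-x) y = - inner A x y := by
  rw [← RightCStarModule.star_inner y, RightCStarModule.inner_neg_right, star_neg,
    RightCStarModule.star_inner]

lemma inner_smul_left_complex (z : ℂ) (x y : E) : inner A (z • x) y = star z • inner A x y := by
  rw [← RightCStarModule.star_inner y, RightCStarModule.inner_smul_right_complex, star_smul,
    RightCStarModule.star_inner]

lemma inner_op_smul_left (a : A) (x y : E) : inner A (x <• a) y = star a * inner A x y := by
  rw [← RightCStarModule.star_inner y, RightCStarModule.inner_op_smul_right, star_mul,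
    RightCStarModule.star_inner]

end RightCStarModule

-- Auxiliary lemmas for the main theorem.
section Aux

open CStarReg Unbounded RightCStarModule

variable {A : Type*} [NonUnitalCStarAlgebra A] [PartialOrder A] [StarOrderedRing A]
variable {E : Type*} [NormedAddCommGroup E] [Module ℂ E] [SMul Aᵐᵒᵖ E] [RightCStarModule A E]
variable {F : Type*} [NormedAddCommGroup F] [Module ℂ F] [SMul Aᵐᵒᵖ F] [RightCStarModule A F]

lemma prod_inner_def (p q : E × F) :
    (inner A p q : A) = (inner A p.1 q.1 : A) + (inner A p.2 q.2 : A) := rfl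

/-- If `(e, f)` is orthogonal to the graph of `t`, then `(f, -e)` lies in the
adjoint graph of `t`; in particular `f ∈ adjDom t`. -/
lemma ortho_graph_mem_adjSet {t : CStarReg.Unbounded A E F} {e : E} {f : F}
    (h : ((e, f) : E × F) ∈ ortho A t.graph) :
    ((f, -e) : F × E) ∈ adjSet A t.graph := by
  intro p hp
  have h0 : (inner A e p.1 : A) + (inner A f p.2 : A) = 0 := h p hp
  have h1 : (inner A f p.2 : A) = - inner A e p.1 := by
    rw [add_comm] at h0
    exact eq_neg_of_add_eq_zero_left h0
  calc (inner A p.2 f : A) = star (inner A f p.2 : A) := (star_inner _ _).symm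
    _ = star (- (inner A e p.1 : A)) := by rw [h1]
    _ = - star (inner A e p.1 : A) := by simp
    _ = - inner A p.1 e := by rw [star_inner]
    _ = inner A p.1 (-e) := by simp

/-- Conversely, if `(f, z)` lies in the adjoint graph, then `(-z, f)` is orthogonal
to the graph of `t`. -/
lemma adjSet_mem_ortho_graph {t : CStarReg.Unbounded A E F} {f : F} {z : E}
    (h : ((f, z) : F × E) ∈ adjSet A t.graph) :
    ((-z, f) : E × F) ∈ ortho A t.graph := by
  intro p hp
  have h1 : (inner A p.2 f : A) = inner A p.1 z := h p hp
  have h2 : (inner A f p.2 : A) = inner A z p.1 := by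
    rw [← star_inner p.2, h1, star_inner]
  show (inner A (-z) p.1 : A) + (inner A f p.2 : A) = 0
  rw [h2]; simp

end Aux

section Statements

open CStarReg Unbounded

variable {A : Type*} [NonUnitalCStarAlgebra A] [PartialOrder A] [StarOrderedRing A]
variable {E : Type*} [NormedAddCommGroup E] [Module ℂ E] [SMul Aᵐᵒᵖ E] [RightCStarModule A E]
  [CompleteSpace E]
variable {F : Type*} [NormedAddCommGroup F] [Module ℂ F] [SMul Aᵐᵒᵖ F] [RightCStarModule A F]
  [CompleteSpace F]

/-- For an essentially defined operator `t : E → F`, the domain of the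
adjoint `t*` is an essential submodule of `F` if and only if `t` is orthogonally closable,
i.e. `Graph(t)^⊥⊥` is the graph of an operator from `E` to `F`. -/
theorem essential_adjDom_iff_orthoClosable
    (t : CStarReg.Unbounded A E F) (ht : t.EssentiallyDefined) :
    IsEssential A t.adjDom ↔
      ∃ s : CStarReg.Unbounded A E F, s.graph = ortho A (ortho A t.graph) := by
  constructor
  · intro hess
    refine ⟨⟨ortho A (ortho A t.graph), ?_, ?_, ?_, ?_, ?_⟩, rfl⟩
    · intro q _
      show (inner A (0:E) q.1 : A) + (inner A (0:F) q.2 : A) = 0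
      simp
    · intro p q hp hq r hr
      have h1 := hp r hr
      have h2 := hq r hr
      show (inner A (p.1 + q.1) r.1 : A) + (inner A (p.2 + q.2) r.2 : A) = 0
      rw [RightCStarModule.inner_add_left, RightCStarModule.inner_add_left]
      rw [prod_inner_def] at h1 h2
      rw [add_add_add_comm, h1, h2, add_zero]
    · intro c p hp r hr
      have h1 := hp r hr
      rw [prod_inner_def] at h1
      show (inner A (c • p.1) r.1 : A) + (inner A (c • p.2) r.2 : A) = 0
      rw [RightCStarModule.inner_smul_left_complex, RightCStarModule.inner_smul_left_complex,
        ← smul_add, h1, smul_zero]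
    · intro a p hp r hr
      have h1 := hp r hr
      rw [prod_inner_def] at h1
      show (inner A (p.1 <• a) r.1 : A) + (inner A (p.2 <• a) r.2 : A) = 0
      rw [RightCStarModule.inner_op_smul_left, RightCStarModule.inner_op_smul_left,
        ← mul_add, h1, mul_zero]
    · intro y hy
      have hmem : y ∈ ortho A t.adjDom := by
        rintro y' ⟨⟨y'', z'⟩, hadj, rfl⟩
        have hor : ((-z', y'') : E × F) ∈ ortho A t.graph := adjSet_mem_ortho_graph hadj
        have h0 := hy _ hor
        rw [prod_inner_def] at h0
        simpa using h0
      rw [hess] at hmem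
      exact hmem
  · rintro ⟨s, hs⟩
    ext y
    simp only [Set.mem_singleton_iff]
    constructor
    · intro hy
      have hmem : ((0 : E), y) ∈ ortho A (ortho A t.graph) := by
        rintro ⟨e, f⟩ hef
        have hf : f ∈ t.adjDom := ⟨(f, -e), ortho_graph_mem_adjSet hef, rfl⟩
        have : (inner A y f : A) = 0 := hy f hf
        show (inner A (0:E) e : A) + (inner A y f : A) = 0
        simp [this]
      rw [← hs] at hmem
      exact s.single_valued hmem
    · rintro rfl
      intro v _
      simp



end Statements
end
end

section
/- Let G be an A-submodule of a Hilbert C*-module E and define the operator p_G with domain D(p_G) = G ⊕ G^⊥ by p_G(x + y) := x for x ∈ G, y ∈ G^⊥. Then p_G is essentially defined and p_G = p_G² ⊆ p_G* = p_{G^⊥⊥}; in particular, p_G is a projection (p_G = p_G² = p_G*) if and only if G is orthogonally closed. Conversely, every essentially defined operator p on E with p = p² = p* equals p_G for some orthogonally closed submodule G of E. -/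
open scoped RightActions Pointwise

noncomputable section

namespace CStarReg

variable (A : Type*)

/-- The Hilbert C⋆-module class as in the December 2024 Mathlib (`CStarModule`), with a right
`A`-action through `Aᵐᵒᵖ`. -/
class CStarModuleRight (A E : Type*) [NonUnitalSemiring A] [StarRing A] [Module ℂ A]
    [AddCommGroup E] [Module ℂ E] [PartialOrder A] [SMul Aᵐᵒᵖ E] [Norm A] [Norm E]
    extends Inner A E where
  inner_add_right {x} {y} {z} : inner x (y + z) = inner x y + inner x z
  inner_self_nonneg {x} : 0 ≤ inner x x
  inner_self {x} : inner x x = 0 ↔ x = 0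
  inner_op_smul_right {a : A} {x y : E} : inner x (y <• a) = inner x y * a
  inner_smul_right_complex {z : ℂ} {x} {y} : inner x (z • y) = z • inner x y
  star_inner x y : star (inner x y) = inner y x
  norm_eq_sqrt_norm_inner_self x : ‖x‖ = √‖inner x x‖

end CStarReg

section Statements

open CStarReg Unbounded

variable {A : Type*} [NonUnitalCStarAlgebra A] [PartialOrder A] [StarOrderedRing A]
variable {E : Type*} [NormedAddCommGroup E] [Module ℂ E] [SMul Aᵐᵒᵖ E] [CStarModuleRight A E]
  [CompleteSpace E]
variable {F : Type*} [NormedAddCommGroup F] [Module ℂ F] [SMul Aᵐᵒᵖ F] [CStarModuleRight A F]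
  [CompleteSpace F]

namespace CSR

lemma inner_add_right {x y z : E} : inner A x (y + z) = inner A x y + inner A x z :=
  CStarModuleRight.inner_add_right

lemma star_inner {x y : E} : star (inner A x y) = inner A y x := CStarModuleRight.star_inner x y

lemma inner_self {x : E} : inner A x x = 0 ↔ x = 0 := CStarModuleRight.inner_self

@[simp]
lemma inner_zero_right {x : E} : inner A x (0 : E) = 0 := by
  have h := CStarModuleRight.inner_smul_right_complex (A := A) (z := (0 : ℂ)) (x := x) (y := x)
  rwa [zero_smul, zero_smul] at h

@[simp]
lemma inner_zero_left {x : E} : inner A (0 : E) x = 0 := by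
  rw [← CSR.star_inner, CSR.inner_zero_right, star_zero]

lemma inner_add_left {x y z : E} : inner A (x + y) z = inner A x z + inner A y z := by
  rw [← CSR.star_inner, CSR.inner_add_right, star_add, CSR.star_inner, CSR.star_inner]

lemma inner_neg_right {x y : E} : inner A x (-y) = -inner A x y := by
  have h := CStarModuleRight.inner_smul_right_complex (A := A) (z := (-1 : ℂ)) (x := x) (y := y)
  rwa [neg_one_smul, neg_one_smul] at h

lemma inner_neg_left {x y : E} : inner A (-x) y = -inner A x y := by
  rw [← CSR.star_inner, CSR.inner_neg_right, star_neg, CSR.star_inner]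

lemma inner_sub_right {x y z : E} : inner A x (y - z) = inner A x y - inner A x z := by
  rw [sub_eq_add_neg, CSR.inner_add_right, CSR.inner_neg_right, ← sub_eq_add_neg]

lemma inner_sub_left {x y z : E} : inner A (x - y) z = inner A x z - inner A y z := by
  rw [sub_eq_add_neg, CSR.inner_add_left, CSR.inner_neg_left, ← sub_eq_add_neg]

lemma inner_smul_left_complex {c : ℂ} {x y : E} : inner A (c • x) y = star c • inner A x y := by
  rw [← CSR.star_inner, CStarModuleRight.inner_smul_right_complex, star_smul, CSR.star_inner]

lemma inner_op_smul_left {a : A} {x y : E} : inner A (x <• a) y = star a * inner A x y := by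
  rw [← CSR.star_inner, CStarModuleRight.inner_op_smul_right, star_mul, CSR.star_inner]

end CSR

section Aux

set_option linter.unusedSectionVars false
set_option linter.unusedVariables false

variable (G : Set E)

lemma aux_ortho' {S : Set E} {x y : E} (hx : x ∈ ortho A S) (hy : y ∈ S) :
    inner A y x = 0 := by
  rw [← CSR.star_inner, hx y hy, star_zero]

lemma aux_zero_mem_ortho (S : Set E) : (0 : E) ∈ ortho A S := fun y _ => CSR.inner_zero_left

lemma aux_subset_ortho_ortho (S : Set E) : S ⊆ ortho A (ortho A S) :=
  fun x hx z hz => aux_ortho' hz hx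

lemma aux_mem_projSet_self {G : Set E} {x : E} (hx : x ∈ G) : (x, x) ∈ projSet A G :=
  ⟨x, hx, 0, aux_zero_mem_ortho G, by simp⟩

lemma aux_snd_mem_projSet {G : Set E} {u v : E} (h : (u, v) ∈ projSet A G) : v ∈ G := by
  obtain ⟨x, hx, y, hy, heq⟩ := h
  rw [Prod.mk.injEq] at heq
  exact heq.2 ▸ hx

lemma aux_adjSet_projSet (h0 : (0 : E) ∈ G) :
    adjSet A (projSet A G) = projSet A (ortho A (ortho A G)) := by
  ext ⟨u, v⟩
  constructor
  · intro h
    have hv : v ∈ ortho A (ortho A G) := by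
      intro z hz
      have h1 := h (0 + z, 0) ⟨0, h0, z, hz, rfl⟩
      simp only [zero_add, CSR.inner_zero_left] at h1
      rw [← CSR.star_inner, ← h1, star_zero]
    have huv : u - v ∈ ortho A G := by
      intro x hx
      have h2 := h (x + 0, x) ⟨x, hx, 0, aux_zero_mem_ortho G, rfl⟩
      simp only [add_zero] at h2
      rw [← CSR.star_inner, CSR.inner_sub_right, h2, sub_self, star_zero]
    exact ⟨v, hv, u - v, aux_subset_ortho_ortho (ortho A G) huv,
      by rw [Prod.mk.injEq]; exact ⟨by abel, rfl⟩⟩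
  · rintro ⟨x, hx, y, hy, heq⟩ pr hpr
    obtain ⟨x', hx', y', hy', heq'⟩ := hpr
    rw [Prod.mk.injEq] at heq
    obtain ⟨rfl, rfl⟩ := heq
    rw [heq']
    simp [CSR.inner_add_right, CSR.inner_add_left,
      aux_ortho' hy (aux_subset_ortho_ortho G hx'),
      aux_ortho' hx hy']

end Aux

/-- Projections onto submodules: for a submodule `G` of `E`, the operator
`p_G` with domain `G ⊕ G^⊥`, `p_G(x + y) = x`, is essentially defined and satisfies
`p_G = p_G² ⊆ p_G* = p_{G^⊥⊥}`; in particular `p_G` is a projection iff `G` is orthogonally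
closed. Conversely, every essentially defined `p` with `p = p² = p*` is of this form. -/
theorem projection_characterization (G : Set E) (h0 : (0 : E) ∈ G)
    (hadd : ∀ x ∈ G, ∀ y ∈ G, x + y ∈ G)
    (hsmul : ∀ (c : ℂ), ∀ x ∈ G, c • x ∈ G)
    (hsmulA : ∀ (a : A), ∀ x ∈ G, x <• a ∈ G) :
    (∃ p : CStarReg.Unbounded A E E, p.graph = projSet A G) ∧
    (∀ p : CStarReg.Unbounded A E E, p.graph = projSet A G →
      p.EssentiallyDefined ∧
      compSet p.graph p.graph = p.graph ∧
      p.graph ⊆ adjSet A p.graph ∧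
      adjSet A p.graph = projSet A (ortho A (ortho A G)) ∧
      (adjSet A p.graph = p.graph ↔ IsOrthoClosedSet A G)) ∧
    (∀ p : CStarReg.Unbounded A E E, p.EssentiallyDefined →
      compSet p.graph p.graph = p.graph → adjSet A p.graph = p.graph →
      ∃ G' : Set E, IsOrthoClosedSet A G' ∧ p.graph = projSet A G') := by
  refine ⟨?_, ?_, ?_⟩
  · -- existence of the operator p_G
    refine ⟨⟨projSet A G, ⟨0, h0, 0, aux_zero_mem_ortho G, by simp⟩, ?_, ?_, ?_, ?_⟩, rfl⟩
    · rintro p q ⟨x, hx, y, hy, rfl⟩ ⟨x', hx', y', hy', rfl⟩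
      refine ⟨x + x', hadd x hx x' hx', y + y', ?_, ?_⟩
      · intro g hg
        rw [CSR.inner_add_left, hy g hg, hy' g hg, add_zero]
      · rw [Prod.mk_add_mk, Prod.mk.injEq]
        exact ⟨by abel, rfl⟩
    · rintro c p ⟨x, hx, y, hy, rfl⟩
      refine ⟨c • x, hsmul c x hx, c • y, ?_, ?_⟩
      · intro g hg
        rw [CSR.inner_smul_left_complex, hy g hg, smul_zero]
      · rw [Prod.smul_mk, Prod.mk.injEq, smul_add]
        exact ⟨rfl, rfl⟩
    · rintro a p ⟨x, hx, y, hy, rfl⟩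
      refine ⟨x <• a, hsmulA a x hx, (x + y) <• a - x <• a, ?_, ?_⟩
      · intro g hg
        rw [CSR.inner_sub_left, CSR.inner_op_smul_left,
          CSR.inner_op_smul_left, CSR.inner_add_left, hy g hg, add_zero, sub_self]
      · rw [Prod.mk.injEq]
        exact ⟨by abel, rfl⟩
    · rintro v ⟨x, hx, y, hy, heq⟩
      rw [Prod.mk.injEq] at heq
      obtain ⟨h1, rfl⟩ := heq
      have hx0 : v = -y := eq_neg_of_add_eq_zero_left h1.symm
      have h6 : inner A v v = -(inner A y v) := by
        rw [← CSR.inner_neg_left, ← hx0]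
      have h5 : inner A v v = 0 := by rw [h6, hy v hx, neg_zero]
      exact CSR.inner_self.mp h5
  · -- properties of p_G
    intro p hp
    have hdiagmem : ∀ x ∈ G, x ∈ p.dom := fun x hx =>
      ⟨(x, x), by rw [hp]; exact aux_mem_projSet_self hx, rfl⟩
    refine ⟨?_, ?_, ?_, ?_, ?_⟩
    · -- essentially defined
      refine Set.eq_singleton_iff_unique_mem.mpr ⟨aux_zero_mem_ortho _, ?_⟩
      intro z hz
      have hzG : z ∈ ortho A G := fun x hx => hz x (hdiagmem x hx)
      have hzdom : z ∈ p.dom :=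
        ⟨(z, 0), by rw [hp]; exact ⟨0, h0, z, hzG, by simp⟩, rfl⟩
      exact CSR.inner_self.mp (hz z hzdom)
    · -- p² = p
      rw [hp]
      ext ⟨u, w⟩
      constructor
      · rintro ⟨v, h1, h2⟩
        obtain ⟨x, hx, y, hy, heq1⟩ := h1
        obtain ⟨x', hx', y', hy', heq2⟩ := h2
        rw [Prod.mk.injEq] at heq1 heq2
        obtain ⟨hu, hvx⟩ := heq1
        obtain ⟨hv, hwx⟩ := heq2
        have hxe : x = x' + y' := by rw [← hvx]; exact hv
        have hy'G : y' ∈ G := by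
          have h3 := hadd x hx ((-1 : ℂ) • x') (hsmul _ _ hx')
          rw [neg_one_smul] at h3
          have h4 : y' = x + -x' := by rw [hxe]; abel
          rwa [← h4] at h3
        have hy'0 : y' = 0 := CSR.inner_self.mp (hy' y' hy'G)
        refine ⟨x, hx, y, hy, ?_⟩
        rw [Prod.mk.injEq]
        exact ⟨hu, by rw [show w = x' from hwx, hxe, hy'0, add_zero]⟩
      · rintro ⟨x, hx, y, hy, heq⟩
        rw [Prod.mk.injEq] at heq
        obtain ⟨h1, h2⟩ := heq
        exact ⟨x, ⟨x, hx, y, hy, by rw [Prod.mk.injEq]; exact ⟨h1, rfl⟩⟩,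
          ⟨x, hx, 0, aux_zero_mem_ortho G, by rw [Prod.mk.injEq]; exact ⟨(add_zero x).symm, h2⟩⟩⟩
    · -- p ⊆ p*
      rw [hp]
      rintro ⟨u, v⟩ ⟨x, hx, y, hy, heq⟩ pr hpr
      obtain ⟨x', hx', y', hy', heq'⟩ := hpr
      rw [Prod.mk.injEq] at heq
      obtain ⟨rfl, rfl⟩ := heq
      rw [heq']
      simp [CSR.inner_add_right, CSR.inner_add_left,
        aux_ortho' hy hx', hy' _ hx]
    · -- p* = p_{G^⊥⊥}
      rw [hp]
      exact aux_adjSet_projSet G h0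
    · -- p* = p ↔ G orthogonally closed
      constructor
      · intro h
        rw [hp, aux_adjSet_projSet G h0] at h
        refine Set.Subset.antisymm ?_ (aux_subset_ortho_ortho G)
        intro v hv
        have : (v, v) ∈ projSet A G := h ▸ aux_mem_projSet_self hv
        exact aux_snd_mem_projSet this
      · intro h
        rw [hp, aux_adjSet_projSet G h0, h]
  · -- converse
    intro p _ hcomp hadj
    have hdiag : ∀ q ∈ p.graph, (q.2, q.2) ∈ p.graph := by
      intro q hq
      have hq' := hq
      rw [← hcomp] at hq'
      obtain ⟨w, h1, h2⟩ := hq'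
      have h3 := p.add_mem h1 (p.smul_mem (-1 : ℂ) hq)
      have h4 : (q.1, w) + (-1 : ℂ) • q = ((0 : E), w - q.2) := by
        rw [Prod.ext_iff]
        simp [neg_one_smul, sub_eq_add_neg]
      rw [h4] at h3
      have h5 : w = q.2 := by rw [← sub_eq_zero]; exact p.single_valued h3
      rwa [h5] at h2
    have hg : p.graph = projSet A p.ran := by
      apply Set.Subset.antisymm
      · rintro ⟨u, v⟩ huv
        have hv : v ∈ p.ran := ⟨(u, v), huv, rfl⟩
        have hd := hdiag (u, v) huv
        have horth : u - v ∈ ortho A p.ran := by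
          rintro v' ⟨q, hq, rfl⟩
          rw [← hadj] at hq
          have e1 : inner A v q.1 = inner A u q.2 := hq (u, v) huv
          have e2 : inner A v q.1 = inner A v q.2 := hq (v, v) hd
          rw [CSR.inner_sub_left, ← e1, e2, sub_self]
        exact ⟨v, hv, u - v, horth, by rw [Prod.mk.injEq]; exact ⟨by abel, rfl⟩⟩
      · rintro ⟨u, v⟩ ⟨x, hx, y, hy, heq⟩
        rw [Prod.mk.injEq] at heq
        obtain ⟨rfl, rfl⟩ := heq
        obtain ⟨q, hq, rfl⟩ := hx
        have hxx : (q.2, q.2) ∈ p.graph := hdiag q hq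
        have hy0 : (y, (0 : E)) ∈ p.graph := by
          rw [← hadj]
          intro pr hpr
          rw [CSR.inner_zero_right, ← CSR.star_inner,
            hy pr.2 ⟨pr, hpr, rfl⟩, star_zero]
        have := p.add_mem hxx hy0
        rwa [Prod.mk_add_mk, add_zero] at this
    refine ⟨p.ran, ?_, hg⟩
    have h0r : (0 : E) ∈ p.ran := ⟨(0, 0), p.zero_mem, rfl⟩
    have hkey : projSet A (ortho A (ortho A p.ran)) = projSet A p.ran := by
      rw [← aux_adjSet_projSet p.ran h0r, ← hg, hadj, hg]
    refine Set.Subset.antisymm ?_ (aux_subset_ortho_ortho p.ran)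
    intro v hv
    have : (v, v) ∈ projSet A p.ran := hkey ▸ aux_mem_projSet_self hv
    exact aux_snd_mem_projSet this


end Statements
end
end

section
/- Let t : E → F be essentially defined and orthogonally closable, and let v : E ⊕ F → F ⊕ E be the unitary (x,y) ↦ (−y,x). Then the following are equivalent: (a) t is graph regular; (b) Graph(t) ⊕ v Graph(t*) = E ⊕ F; (c) Range(1 + t*t) = E and Range(1 + tt*) = F. Moreover, if t is graph regular, then D(t*t) is an essential core for t (i.e. Graph(t restricted to D(t*t))^⊥ = Graph(t)^⊥) and t* is graph regular; and if t is orthogonally closed and t* is graph regular, then t is graph regular. -/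
set_option linter.unusedSectionVars false

open scoped RightActions Pointwise

noncomputable section

/-- The Hilbert C*-module class as it stood in the older Mathlib (right action through `Aᵐᵒᵖ`,
inner product `A`-linear in the second variable for the right action). -/
class OldCStarModule (A E : Type*) [NonUnitalSemiring A] [StarRing A] [Module ℂ A]
    [AddCommGroup E] [Module ℂ E] [PartialOrder A] [SMul Aᵐᵒᵖ E] [Norm A] [Norm E]
    extends Inner A E where
  inner_add_right {x} {y} {z} : inner x (y + z) = inner x y + inner x z
  inner_self_nonneg {x} : 0 ≤ inner x x
  inner_self {x} : inner x x = 0 ↔ x = 0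
  inner_op_smul_right {a : A} {x y : E} : inner x (y <• a) = inner x y * a
  inner_smul_right_complex {z : ℂ} {x} {y} : inner x (z • y) = z • inner x y
  star_inner x y : star (inner x y) = inner y x
  norm_eq_sqrt_norm_inner_self x : ‖x‖ = √‖inner x x‖

section Statements

open CStarReg Unbounded

variable {A : Type*} [NonUnitalCStarAlgebra A] [PartialOrder A] [StarOrderedRing A]
variable {E : Type*} [NormedAddCommGroup E] [Module ℂ E] [SMul Aᵐᵒᵖ E] [OldCStarModule A E]
  [CompleteSpace E]
variable {F : Type*} [NormedAddCommGroup F] [Module ℂ F] [SMul Aᵐᵒᵖ F] [OldCStarModule A F]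
  [CompleteSpace F]

section Aux

variable {A : Type*} [NonUnitalCStarAlgebra A] [PartialOrder A] [StarOrderedRing A]
variable {E : Type*} [NormedAddCommGroup E] [Module ℂ E] [SMul Aᵐᵒᵖ E] [OldCStarModule A E]
variable {F : Type*} [NormedAddCommGroup F] [Module ℂ F] [SMul Aᵐᵒᵖ F] [OldCStarModule A F]

namespace OldCStarModule

lemma inner_zero_right' (x : E) : inner A x (0:E) = 0 := by
  have h := OldCStarModule.inner_add_right (A := A) (x := x) (y := (0:E)) (z := (0:E))
  rw [add_zero] at h
  have h' : inner A x (0:E) + inner A x (0:E) = inner A x (0:E) + 0 := by rw [← h, add_zero]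
  exact add_left_cancel h'

lemma inner_neg_right (x y : E) : inner A x (-y) = -inner A x y := by
  have h := OldCStarModule.inner_add_right (A := A) (x := x) (y := y) (z := -y)
  rw [add_neg_cancel, OldCStarModule.inner_zero_right'] at h
  exact eq_neg_of_add_eq_zero_right h.symm

lemma inner_add_left (x y z : E) : inner A (x + y) z = inner A x z + inner A y z := by
  rw [← OldCStarModule.star_inner z (x + y), OldCStarModule.inner_add_right, star_add,
    OldCStarModule.star_inner, OldCStarModule.star_inner]

lemma inner_neg_left (x y : E) : inner A (-x) y = -inner A x y := by
  rw [← OldCStarModule.star_inner y (-x), OldCStarModule.inner_neg_right, star_neg,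
    OldCStarModule.star_inner]

end OldCStarModule

lemma pinner_def (p q : E × F) :
    (inner A p q : A) = inner A p.1 q.1 + inner A p.2 q.2 := rfl

lemma pinner_add_left (p q r : E × F) : (inner A (p + q) r : A) = inner A p r + inner A q r := by
  simp only [pinner_def, Prod.fst_add, Prod.snd_add, OldCStarModule.inner_add_left]
  abel

lemma pinner_neg_left (p r : E × F) : (inner A (-p) r : A) = -inner A p r := by
  simp only [pinner_def, Prod.fst_neg, Prod.snd_neg, OldCStarModule.inner_neg_left]
  abel

lemma pinner_star (p q : E × F) : star (inner A p q : A) = inner A q p := by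
  simp only [pinner_def, star_add, OldCStarModule.star_inner]

lemma pinner_self_eq_zero {p : E × F} (h : (inner A p p : A) = 0) : p = 0 := by
  have h1 : (0:A) ≤ inner A p.1 p.1 := OldCStarModule.inner_self_nonneg
  have h2 : (0:A) ≤ inner A p.2 p.2 := OldCStarModule.inner_self_nonneg
  have e : (inner A p.1 p.1 : A) + inner A p.2 p.2 = 0 := h
  have e1 : (inner A p.1 p.1 : A) = - inner A p.2 p.2 := eq_neg_of_add_eq_zero_left e
  have hz1 : (inner A p.1 p.1 : A) = 0 :=
    le_antisymm (e1 ▸ neg_nonpos.mpr h2) h1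
  have hz2 : (inner A p.2 p.2 : A) = 0 := by
    rw [hz1, zero_add] at e; exact e
  have : p.1 = 0 := OldCStarModule.inner_self.mp hz1
  have h2' : p.2 = 0 := OldCStarModule.inner_self.mp hz2
  exact Prod.ext this h2'

variable {S T : Set (E × F)}

lemma ortho_mem_iff {q : E × F} : q ∈ ortho A S ↔ ∀ p ∈ S, (inner A q p : A) = 0 := Iff.rfl

lemma ortho_zero_mem : (0 : E × F) ∈ ortho A S := by
  intro p hp
  have : ((0 : E × F)) = (0 : E × F) + (-(0 : E × F)) := by simp
  have h0 : (inner A (0 : E × F) p : A) + inner A (0 : E × F) p = inner A (0 : E × F) p := by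
    rw [← pinner_add_left]; simp
  exact add_right_cancel (by rw [h0, zero_add])

lemma ortho_add_mem {p q : E × F} (hp : p ∈ ortho A S) (hq : q ∈ ortho A S) :
    p + q ∈ ortho A S := by
  intro r hr
  rw [pinner_add_left, hp r hr, hq r hr, add_zero]

lemma ortho_neg_mem {p : E × F} (hp : p ∈ ortho A S) : -p ∈ ortho A S := by
  intro r hr
  rw [pinner_neg_left, hp r hr, neg_zero]

lemma ortho_sub_mem {p q : E × F} (hp : p ∈ ortho A S) (hq : q ∈ ortho A S) :
    p - q ∈ ortho A S := by
  rw [sub_eq_add_neg]; exact ortho_add_mem hp (ortho_neg_mem hq)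

lemma ortho_antitone (h : S ⊆ T) : ortho A T ⊆ ortho A S :=
  fun _ hq p hp => hq p (h hp)

lemma subset_ortho_ortho : S ⊆ ortho A (ortho A S) := by
  intro p hp q hq
  rw [← pinner_star, hq p hp, star_zero]

/-- Key: membership in the adjoint graph versus the orthogonal complement. -/
lemma adjSet_iff_ortho {y : F} {z : E} :
    (y, z) ∈ adjSet A S ↔ ((-z, y) : E × F) ∈ ortho A S := by
  constructor
  · intro h p hp
    have h1 : (inner A p.2 y : A) = inner A p.1 z := h p hp
    have h2 : (inner A y p.2 : A) = inner A z p.1 := by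
      rw [← OldCStarModule.star_inner p.2 y, h1, OldCStarModule.star_inner]
    show (inner A (-z) p.1 : A) + inner A y p.2 = 0
    rw [OldCStarModule.inner_neg_left, h2, neg_add_cancel]
  · intro h p hp
    have h1 : (inner A (-z) p.1 : A) + inner A y p.2 = 0 := h p hp
    rw [OldCStarModule.inner_neg_left] at h1
    have h2 : (inner A y p.2 : A) = inner A z p.1 := by
      have h3 : (inner A y p.2 : A) - inner A z p.1 = 0 := by
        rw [sub_eq_add_neg, add_comm]; exact h1
      exact sub_eq_zero.mp h3
    show (inner A p.2 y : A) = inner A p.1 z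
    rw [← OldCStarModule.star_inner y p.2, h2, OldCStarModule.star_inner]

lemma adjSet_neg_mem {y : F} {z : E} (h : (y, z) ∈ adjSet A S) :
    (-y, -z) ∈ adjSet A S := by
  rw [adjSet_iff_ortho] at h ⊢
  have := ortho_neg_mem h
  simpa using this

lemma image_adjSet_eq_ortho :
    (fun q : F × E => (q.2, -q.1)) '' adjSet A S = ortho A S := by
  ext p
  constructor
  · rintro ⟨⟨y, z⟩, hq, rfl⟩
    rw [adjSet_iff_ortho] at hq
    simpa using ortho_neg_mem hq
  · intro hp
    refine ⟨(-p.2, p.1), ?_, by simp⟩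
    rw [adjSet_iff_ortho]
    exact ortho_neg_mem hp

/-- The "rotation" unitary `E ⊕ F → F ⊕ E`. -/
def wrot (p : E × F) : F × E := (p.2, -p.1)

lemma wrot_wrot' (q : F × E) : wrot ((-q.2, q.1) : E × F) = q := by simp [wrot]

lemma wrot'_wrot (p : E × F) : ((-(wrot p).2, (wrot p).1) : E × F) = p := by simp [wrot]

lemma wrot_injective : Function.Injective (wrot (E := E) (F := F)) := by
  intro p q h
  have := congrArg (fun r : F × E => ((-r.2, r.1) : E × F)) h
  simpa [wrot'_wrot] using this

lemma wrot_add (p q : E × F) : wrot (p + q) = wrot p + wrot q := by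
  simp [wrot, Prod.ext_iff]; abel

lemma wrot_inner (p q : E × F) : (inner A (wrot p) (wrot q) : A) = inner A p q := by
  simp only [wrot, pinner_def, OldCStarModule.inner_neg_left, OldCStarModule.inner_neg_right,
    neg_neg]
  exact add_comm _ _

lemma adjSet_eq_wrot_image : adjSet A S = wrot '' ortho A S := by
  ext ⟨y, z⟩
  rw [adjSet_iff_ortho]
  constructor
  · intro h
    exact ⟨(-z, y), h, by simp [wrot]⟩
  · rintro ⟨p, hp, hw⟩
    have : ((-z, y) : E × F) = p := by
      have := congrArg (fun r : F × E => ((-r.2, r.1) : E × F)) hw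
      simpa [wrot'_wrot] using this.symm
    rwa [this]

lemma ortho_wrot_image : ortho A (wrot '' S) = wrot '' ortho A S := by
  ext q
  constructor
  · intro hq
    refine ⟨(-q.2, q.1), ?_, wrot_wrot' q⟩
    intro p hp
    have := hq (wrot p) ⟨p, hp, rfl⟩
    rwa [← wrot_wrot' q, wrot_inner] at this
  · rintro ⟨p, hp, rfl⟩
    rintro r ⟨p', hp', rfl⟩
    rw [wrot_inner]
    exact hp p' hp'

lemma orthoClosed_of_sum_eq_univ (h : S + ortho A S = Set.univ) :
    ortho A (ortho A S) = S := by
  apply Set.Subset.antisymm _ subset_ortho_ortho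
  intro x hx
  have : x ∈ S + ortho A S := h ▸ Set.mem_univ x
  obtain ⟨p, hp, n, hn, hpn⟩ := Set.mem_add.mp this
  have hx' : x - p ∈ ortho A (ortho A S) :=
    ortho_sub_mem hx (subset_ortho_ortho hp)
  have hn' : x - p ∈ ortho A S := by rw [← hpn]; simpa using hn
  have : (inner A (x - p) (x - p) : A) = 0 := hx' _ hn'
  have : x - p = 0 := pinner_self_eq_zero this
  have : x = p := by rwa [sub_eq_zero] at this
  rwa [this]

end Aux

/-- Characterizations of graph regularity for an essentially defined,
orthogonally closable operator `t : E → F`. -/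
theorem graphRegular_characterizations (t : CStarReg.Unbounded A E F)
    (h1 : t.EssentiallyDefined) (h2 : IsEssential A t.adjDom) :
    -- (a) ↔ (b): `Graph(t) ⊕ v Graph(t*) = E ⊕ F`
    (t.GraphRegular ↔
      t.graph + (fun q : F × E => (q.2, -q.1)) '' adjSet A t.graph = Set.univ) ∧
    -- (a) ↔ (c): `Range(1 + t*t) = E` and `Range(1 + tt*) = F`
    (t.GraphRegular ↔
      (Prod.snd '' oneAddSet t.adjCompGraph = Set.univ ∧
        Prod.snd '' oneAddSet t.compAdjGraph = Set.univ)) ∧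
    -- `D(t*t)` is an essential core for `t`
    (t.GraphRegular →
      ortho A (restrictSet t.graph (Prod.fst '' t.adjCompGraph)) = ortho A t.graph) ∧
    -- `t*` is graph regular
    (t.GraphRegular → ∀ s : CStarReg.Unbounded A F E, s.IsAdjointOf t → s.GraphRegular) ∧
    -- if `t` is orthogonally closed and `t*` is graph regular, then `t` is graph regular
    (t.OrthoClosed →
      ∀ s : CStarReg.Unbounded A F E, s.IsAdjointOf t → s.GraphRegular → t.GraphRegular) := by
  have hImg : (fun q : F × E => (q.2, -q.1)) '' adjSet A t.graph = ortho A t.graph :=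
    image_adjSet_eq_ortho
  have hadj_w : adjSet A t.graph = wrot '' ortho A t.graph := adjSet_eq_wrot_image
  have reg_iff : t.GraphRegular ↔ t.graph + ortho A t.graph = Set.univ :=
    ⟨fun h => h.2.2, fun h => ⟨h1, orthoClosed_of_sum_eq_univ h, h⟩⟩
  -- sum ⇒ surjectivity of 1 + t*t
  have range1 : t.graph + ortho A t.graph = Set.univ →
      Prod.snd '' oneAddSet t.adjCompGraph = Set.univ := by
    intro hsum
    apply Set.eq_univ_of_forall
    intro x
    have hx : ((x, (0:F)) : E × F) ∈ t.graph + ortho A t.graph := hsum ▸ Set.mem_univ _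
    obtain ⟨p, hp, q, hq, hpq⟩ := Set.mem_add.mp hx
    rw [← hImg] at hq
    obtain ⟨⟨y, z⟩, hyz, rfl⟩ := hq
    have he : p.1 + z = x := congrArg Prod.fst hpq
    have hf : p.2 + -y = 0 := congrArg Prod.snd hpq
    have hy : y = p.2 := by
      have := eq_neg_of_add_eq_zero_left hf; rw [this, neg_neg]
    refine ⟨(p.1, x), ⟨z, ⟨p.2, hp, ?_⟩, he.symm⟩, rfl⟩
    rw [← hy]; exact hyz
  -- sum ⇒ surjectivity of 1 + t t*
  have range2 : t.graph + ortho A t.graph = Set.univ →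
      Prod.snd '' oneAddSet t.compAdjGraph = Set.univ := by
    intro hsum
    apply Set.eq_univ_of_forall
    intro yv
    have hx : (((0:E), yv) : E × F) ∈ t.graph + ortho A t.graph := hsum ▸ Set.mem_univ _
    obtain ⟨p, hp, q, hq, hpq⟩ := Set.mem_add.mp hx
    rw [← hImg] at hq
    obtain ⟨⟨y, z⟩, hyz, rfl⟩ := hq
    have he : p.1 + z = 0 := congrArg Prod.fst hpq
    have hz : z = -p.1 := eq_neg_of_add_eq_zero_right he
    have hf : p.2 + -y = yv := congrArg Prod.snd hpq
    have hneg : (-y, -z) ∈ adjSet A t.graph := adjSet_neg_mem hyz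
    rw [hz, neg_neg] at hneg
    refine ⟨(-y, yv), ⟨p.2, ⟨p.1, hneg, hp⟩, ?_⟩, rfl⟩
    rw [← hf]; abel
  -- surjectivity of both ⇒ sum
  have range_to_sum : Prod.snd '' oneAddSet t.adjCompGraph = Set.univ →
      Prod.snd '' oneAddSet t.compAdjGraph = Set.univ →
      t.graph + ortho A t.graph = Set.univ := by
    intro hc1 hc2
    apply Set.eq_univ_of_forall
    rintro ⟨x, yv⟩
    have hx : ((x, (0:F)) : E × F) ∈ t.graph + ortho A t.graph := by
      have : x ∈ Prod.snd '' oneAddSet t.adjCompGraph := hc1 ▸ Set.mem_univ x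
      obtain ⟨⟨e, x'⟩, ⟨y', ⟨f, hef, hfy⟩, hadd⟩, rfl⟩ := this
      refine Set.mem_add.mpr ⟨(e, f), hef, (y', -f), ?_, ?_⟩
      · rw [← hImg]; exact ⟨(f, y'), hfy, rfl⟩
      · have : e + y' = x' := hadd.symm
        rw [Prod.mk_add_mk, this, add_neg_cancel]
    have hy : (((0:E), yv) : E × F) ∈ t.graph + ortho A t.graph := by
      have : yv ∈ Prod.snd '' oneAddSet t.compAdjGraph := hc2 ▸ Set.mem_univ yv
      obtain ⟨⟨a, yv'⟩, ⟨y', ⟨m, ham, hmy⟩, hadd⟩, rfl⟩ := this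
      refine Set.mem_add.mpr ⟨(m, y'), hmy, (-m, a), ?_, ?_⟩
      · rw [← hImg]
        exact ⟨(-a, -m), adjSet_neg_mem ham, by simp⟩
      · have : a + y' = yv' := hadd.symm
        rw [Prod.mk_add_mk, add_neg_cancel, ← this, add_comm]
    obtain ⟨p1, hp1, q1, hq1, h1'⟩ := Set.mem_add.mp hx
    obtain ⟨p2, hp2, q2, hq2, h2'⟩ := Set.mem_add.mp hy
    refine Set.mem_add.mpr ⟨p1 + p2, t.add_mem hp1 hp2, q1 + q2, ortho_add_mem hq1 hq2, ?_⟩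
    have : (p1 + q1) + (p2 + q2) = ((x, (0:F)) : E × F) + ((0:E), yv) := by rw [h1', h2']
    calc p1 + p2 + (q1 + q2) = (p1 + q1) + (p2 + q2) := by abel
      _ = ((x, (0:F)) : E × F) + ((0:E), yv) := this
      _ = (x, yv) := by rw [Prod.mk_add_mk, add_zero, zero_add]
  refine ⟨?_, ?_, ?_, ?_, ?_⟩
  · rw [hImg]; exact reg_iff
  · constructor
    · intro h
      exact ⟨range1 h.2.2, range2 h.2.2⟩
    · rintro ⟨hc1, hc2⟩
      exact reg_iff.mpr (range_to_sum hc1 hc2)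
  · intro hreg
    have hsum := hreg.2.2
    apply Set.Subset.antisymm
    · intro q hq
      obtain ⟨p, hp, n, hn, hpn⟩ := Set.mem_add.mp (hsum ▸ Set.mem_univ q)
      have hsub : restrictSet t.graph (Prod.fst '' t.adjCompGraph) ⊆ t.graph :=
        fun r hr => hr.1
      have hn' : n ∈ ortho A (restrictSet t.graph (Prod.fst '' t.adjCompGraph)) :=
        ortho_antitone hsub hn
      have hpq : p = q - n := eq_sub_of_add_eq hpn
      have hp' : p ∈ ortho A (restrictSet t.graph (Prod.fst '' t.adjCompGraph)) := by
        rw [hpq]; exact ortho_sub_mem hq hn'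
      -- show p = 0 using surjectivity of 1 + t*t
      have hr1 := range1 hsum
      have : p.1 ∈ Prod.snd '' oneAddSet t.adjCompGraph := hr1 ▸ Set.mem_univ p.1
      obtain ⟨⟨u, p1'⟩, ⟨y', ⟨f, huf, hfy⟩, hadd⟩, hsnd⟩ := this
      have hp1 : p.1 = u + y' := by rw [← hsnd]; exact hadd
      have hu_dom : u ∈ Prod.fst '' t.adjCompGraph := ⟨(u, y'), ⟨f, huf, hfy⟩, rfl⟩
      have h0 : (inner A p.1 u : A) + inner A p.2 f = 0 := hp' (u, f) ⟨huf, hu_dom⟩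
      have h1' : (inner A p.2 f : A) = inner A p.1 y' := hfy p hp
      have h2' : (inner A p.1 (u + y') : A) = 0 := by
        rw [OldCStarModule.inner_add_right, ← h1']; exact h0
      rw [← hp1] at h2'
      have hp10 : p.1 = 0 := OldCStarModule.inner_self.mp h2'
      have hp20 : p.2 = 0 := by
        apply t.single_valued
        have : p = ((0 : E), p.2) := Prod.ext hp10 rfl
        rwa [← this]
      have hp0 : p = 0 := Prod.ext hp10 hp20
      have : q = n := by rw [← hpn, hp0, zero_add]
      rwa [this]
    · exact ortho_antitone (fun r hr => hr.1)
  · intro hreg s hs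
    have hOCg : ortho A (ortho A t.graph) = t.graph := hreg.2.1
    have hortho_ad : ortho A s.graph = wrot '' t.graph := by
      rw [hs]
      show ortho A (adjSet A t.graph) = wrot '' t.graph
      rw [hadj_w, ortho_wrot_image, hOCg]
    refine ⟨?_, ?_, ?_⟩
    · show IsEssential A (Prod.fst '' s.graph)
      rw [hs]; exact h2
    · show ortho A (ortho A s.graph) = s.graph
      rw [hortho_ad, ortho_wrot_image, ← hadj_w, ← hs]
    · apply Set.eq_univ_of_forall
      intro r
      have hr : ((-r.2, r.1) : E × F) ∈ t.graph + ortho A t.graph :=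
        hreg.2.2 ▸ Set.mem_univ _
      obtain ⟨p, hp, q, hq, hpq⟩ := Set.mem_add.mp hr
      refine Set.mem_add.mpr ⟨wrot q, ?_, wrot p, ?_, ?_⟩
      · rw [hs]
        show wrot q ∈ adjSet A t.graph
        rw [hadj_w]; exact ⟨q, hq, rfl⟩
      · rw [hortho_ad]; exact ⟨p, hp, rfl⟩
      · rw [← wrot_add, add_comm q p, hpq, wrot_wrot']
  · intro hOC s hs hregs
    have hortho_ad : ortho A (adjSet A t.graph) = wrot '' t.graph := by
      rw [hadj_w, ortho_wrot_image]
      show wrot '' ortho A (ortho A t.graph) = wrot '' t.graph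
      rw [hOC]
    have hsum_s : adjSet A t.graph + ortho A (adjSet A t.graph) = Set.univ := by
      have := hregs.2.2; rwa [hs] at this
    refine ⟨h1, hOC, ?_⟩
    apply Set.eq_univ_of_forall
    intro p
    obtain ⟨a, ha, b, hb, hab⟩ := Set.mem_add.mp (hsum_s ▸ Set.mem_univ (wrot p))
    rw [hadj_w] at ha
    obtain ⟨qa, hqa, rfl⟩ := ha
    rw [hortho_ad] at hb
    obtain ⟨qb, hqb, rfl⟩ := hb
    have : wrot (qa + qb) = wrot p := by rw [wrot_add]; exact hab
    have hqab : qa + qb = p := wrot_injective this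
    exact Set.mem_add.mpr ⟨qb, hqb, qa, hqa, by rw [add_comm]; exact hqab⟩

end Statements
end
end

section
/- Let x ∈ Adj(F,E) be an adjointable operator between Hilbert C*-modules with Null(x) = {0} and Null(x*) = {0}. Then the inverse x^{-1}, with domain Range(x), is a graph regular operator, and (x^{-1})* = (x*)^{-1}. -/
open scoped RightActions Pointwise

noncomputable section

/-- The Hilbert C⋆-module class as in the older Mathlib (right `A`-action via `Aᵐᵒᵖ`). -/
class CStarModuleOld (A E : Type*) [NonUnitalSemiring A] [StarRing A]
    [Module ℂ A] [AddCommGroup E] [Module ℂ E] [PartialOrder A] [SMul Aᵐᵒᵖ E] [Norm A] [Norm E]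
    extends Inner A E where
  inner_add_right {x} {y} {z} : inner x (y + z) = inner x y + inner x z
  inner_self_nonneg {x} : 0 ≤ inner x x
  inner_self {x} : inner x x = 0 ↔ x = 0
  inner_op_smul_right {a : A} {x y : E} : inner x (y <• a) = inner x y * a
  inner_smul_right_complex {z : ℂ} {x} {y} : inner x (z • y) = z • inner x y
  star_inner x y : star (inner x y) = inner y x
  norm_eq_sqrt_norm_inner_self x : ‖x‖ = √‖inner x x‖

namespace CStarModuleOld

section general

variable {A E : Type*} [NonUnitalCStarAlgebra A] [PartialOrder A] [AddCommGroup E] [Module ℂ E]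
  [SMul Aᵐᵒᵖ E] [Norm E] [CStarModuleOld A E]

open scoped RightActions

lemma inner_add_left {x y z : E} : inner A (x + y) z = inner A x z + inner A y z := by
  rw [← star_star (r := inner A (x + y) z)]
  simp only [star_inner, inner_add_right, star_add]

lemma inner_op_smul_left {a : A} {x y : E} : inner A (x <• a) y = star a * inner A x y := by
  rw [← star_inner, inner_op_smul_right, star_mul, star_inner]

lemma inner_smul_left_complex {z : ℂ} {x y : E} : inner A (z • x) y = star z • inner A x y := by
  rw [← star_inner, inner_smul_right_complex, star_smul, star_inner]

lemma inner_zero_right {x : E} : inner A x (0 : E) = 0 := by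
  have h : inner A x (0 : E) = inner A x (0 : E) + inner A x (0 : E) := by
    rw [← inner_add_right, add_zero]
  simpa using h

lemma inner_zero_left {x : E} : inner A (0 : E) x = 0 := by
  rw [← star_inner, inner_zero_right, star_zero]

lemma inner_neg_right {x y : E} : inner A x (-y) = -inner A x y := by
  have h : inner A x (-y) + inner A x y = 0 := by
    rw [← inner_add_right, neg_add_cancel, inner_zero_right]
  exact eq_neg_of_add_eq_zero_left h

lemma inner_neg_left {x y : E} : inner A (-x) y = -inner A x y := by
  rw [← star_inner, inner_neg_right, star_neg, star_inner]

lemma inner_sub_right {x y z : E} : inner A x (y - z) = inner A x y - inner A x z := by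
  rw [sub_eq_add_neg, inner_add_right, inner_neg_right, ← sub_eq_add_neg]

lemma inner_sub_left {x y z : E} : inner A (x - y) z = inner A x z - inner A y z := by
  rw [sub_eq_add_neg, inner_add_left, inner_neg_left, ← sub_eq_add_neg]

end general

section norm

variable {A E : Type*} [NonUnitalCStarAlgebra A] [PartialOrder A] [StarOrderedRing A]
  [NormedAddCommGroup E] [Module ℂ E] [SMul Aᵐᵒᵖ E] [CStarModuleOld A E]

open scoped RightActions

lemma norm_sq_eq {x : E} : ‖x‖ ^ 2 = ‖inner A x x‖ := by
  rw [norm_eq_sqrt_norm_inner_self (A := A) x, Real.sq_sqrt (norm_nonneg _)]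

lemma inner_mul_inner_swap_le {x y : E} :
    inner A y x * inner A x y ≤ ‖x‖ ^ 2 • inner A y y := by
  rcases eq_or_ne x 0 with h | h
  · subst h
    simp [inner_zero_left, inner_zero_right]
  · have hx : 0 < ‖x‖ := norm_pos_iff.mpr h
    set r : ℝ := ‖x‖ ^ 2 with hr
    have key : ∀ a : A, (0 : A) ≤ r • (a * star a) - r • (a * inner A x y)
        - r • (inner A y x * star a) + r • (r • inner A y y) := by
      intro a
      have h0 : (0 : A) ≤ inner A (x <• star a - (r : ℂ) • y) (x <• star a - (r : ℂ) • y) :=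
        inner_self_nonneg
      have hrs : ∀ b : A, (r : ℂ) • b = r • b := fun b =>
        (RCLike.real_smul_eq_coe_smul (K := ℂ) r b).symm
      have h1 : inner A (x <• star a - (r : ℂ) • y) (x <• star a - (r : ℂ) • y)
          = a * (inner A x x * star a) - r • (a * inner A x y)
            - r • (inner A y x * star a) + r • (r • inner A y y) := by
        simp only [inner_sub_left, inner_sub_right, inner_op_smul_left, inner_op_smul_right,
          inner_smul_left_complex, inner_smul_right_complex, star_star, Complex.star_def,
          Complex.conj_ofReal, hrs, mul_sub, sub_mul, smul_sub, mul_smul_comm,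
          smul_mul_assoc, mul_assoc]
        abel
      have h2 : a * (inner A x x * star a) ≤ r • (a * star a) := by
        rw [← mul_assoc]
        calc a * inner A x x * star a ≤ ‖inner A x x‖ • (a * star a) :=
              CStarAlgebra.star_right_conjugate_le_norm_smul (hb := star_inner x x)
          _ = r • (a * star a) := by rw [hr, norm_sq_eq (A := A)]
      rw [h1] at h0
      refine h0.trans ?_
      gcongr
    specialize key (inner A y x)
    simp only [star_inner, sub_self, zero_sub, le_neg_add_iff_add_le, add_zero] at key
    rwa [smul_le_smul_iff_of_pos_left (pow_pos hx _)] at key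

variable (E) in
lemma norm_inner_le {x y : E} : ‖inner A x y‖ ≤ ‖x‖ * ‖y‖ := by
  have := calc ‖inner A x y‖ ^ 2 = ‖inner A y x * inner A x y‖ := by
                rw [← star_inner x y, CStarRing.norm_star_mul_self, pow_two]
    _ ≤ ‖‖x‖ ^ 2 • inner A y y‖ := by
                refine CStarAlgebra.norm_le_norm_of_nonneg_of_le ?_ inner_mul_inner_swap_le
                rw [← star_inner x y]
                exact star_mul_self_nonneg _
    _ = ‖x‖ ^ 2 * ‖inner A y y‖ := by
                rw [norm_smul, Real.norm_eq_abs, abs_of_nonneg (by positivity)]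
    _ = ‖x‖ ^ 2 * ‖y‖ ^ 2 := by rw [← norm_sq_eq (A := A)]
    _ = (‖x‖ * ‖y‖) ^ 2 := by ring
  exact (pow_le_pow_iff_left₀ (norm_nonneg _) (by positivity) (by norm_num)).mp this

end norm

section cont

variable {A E : Type*} [NonUnitalCStarAlgebra A] [PartialOrder A] [StarOrderedRing A]
  [NormedAddCommGroup E] [NormedSpace ℂ E] [SMul Aᵐᵒᵖ E] [CStarModuleOld A E]

/-- The inner product as a sesquilinear map. -/
def innerSesq : E →ₗ⋆[ℂ] E →ₗ[ℂ] A where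
  toFun x := { toFun := fun y => inner A x y
               map_add' := fun z y => inner_add_right
               map_smul' := fun z y => inner_smul_right_complex }
  map_add' z y := by ext; simp [inner_add_left]
  map_smul' z y := by ext; simp [inner_smul_left_complex]

lemma continuous_inner : Continuous (fun p : E × E => inner A p.1 p.2) := by
  have hb : ∀ x y : E, ‖innerSesq (A := A) x y‖ ≤ 1 * ‖x‖ * ‖y‖ := fun x y => by
    rw [one_mul]; exact norm_inner_le (A := A) E
  have : Continuous fun p : E × E =>
      (LinearMap.mkContinuous₂ (innerSesq (A := A) (E := E)) 1 hb) p.1 p.2 := by fun_prop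
  exact this

end cont

lemma normedSpaceCore {E : Type*} (A : Type*) [NonUnitalCStarAlgebra A] [PartialOrder A]
    [NormedAddCommGroup E] [Module ℂ E] [SMul Aᵐᵒᵖ E] [CStarModuleOld A E] :
    NormedSpace.Core ℂ E where
  norm_nonneg x := norm_nonneg x
  norm_smul c x := by
    simp [norm_eq_sqrt_norm_inner_self (A := A), inner_smul_left_complex,
      inner_smul_right_complex, norm_smul, ← mul_assoc]
  norm_triangle x y := norm_add_le x y
  norm_eq_zero_iff x := norm_eq_zero

end CStarModuleOld

section Statements

open CStarReg Unbounded

variable {A : Type*} [NonUnitalCStarAlgebra A] [PartialOrder A] [StarOrderedRing A]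
variable {E : Type*} [NormedAddCommGroup E] [Module ℂ E] [SMul Aᵐᵒᵖ E] [CStarModuleOld A E]
  [CompleteSpace E]
variable {F : Type*} [NormedAddCommGroup F] [Module ℂ F] [SMul Aᵐᵒᵖ F] [CStarModuleOld A F]
  [CompleteSpace F]

namespace InvAux

lemma t2A : T2Space A := inferInstance

set_option synthInstance.checkSynthOrder false in
local instance instNSE : NormedSpace ℂ E := .ofCore (CStarModuleOld.normedSpaceCore (A := A))
set_option synthInstance.checkSynthOrder false in
local instance instNSF : NormedSpace ℂ F := .ofCore (CStarModuleOld.normedSpaceCore (A := A))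

lemma ext_l {u : E} (h : ∀ w : E, (inner A u w : A) = 0) : u = 0 :=
  CStarModuleOld.inner_self.mp (h u)

lemma ext_r {u : E} (h : ∀ w : E, (inner A w u : A) = 0) : u = 0 :=
  CStarModuleOld.inner_self.mp (h u)

variable (x : Adjointable A F E)

lemma adj_inner (z : E) (y : F) : (inner A (x.adjFun z) y : A) = inner A z (x.toFun y) := by
  have h := congrArg star (x.adjoint_eq y z)
  simpa only [CStarModuleOld.star_inner] using h.symm

lemma toFun_add' (u v : F) : x.toFun (u + v) = x.toFun u + x.toFun v := by
  have h : ∀ w : E, (inner A (x.toFun (u + v) - (x.toFun u + x.toFun v)) w : A) = 0 := by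
    intro w
    simp only [CStarModuleOld.inner_sub_left, CStarModuleOld.inner_add_left, x.adjoint_eq]
    abel
  exact sub_eq_zero.mp (ext_l h)

lemma toFun_smul' (c : ℂ) (u : F) : x.toFun (c • u) = c • x.toFun u := by
  have h : ∀ w : E, (inner A (x.toFun (c • u) - c • x.toFun u) w : A) = 0 := by
    intro w
    simp only [CStarModuleOld.inner_sub_left, CStarModuleOld.inner_smul_left_complex, x.adjoint_eq,
      sub_self]
  exact sub_eq_zero.mp (ext_l h)

lemma toFun_opsmul' (a : A) (u : F) : x.toFun (u <• a) = x.toFun u <• a := by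
  have h : ∀ w : E, (inner A (x.toFun (u <• a) - x.toFun u <• a) w : A) = 0 := by
    intro w
    simp only [CStarModuleOld.inner_sub_left, CStarModuleOld.inner_op_smul_left, x.adjoint_eq,
      sub_self]
  exact sub_eq_zero.mp (ext_l h)

lemma toFun_zero' : x.toFun 0 = 0 := by
  have h := toFun_smul' x 0 0
  simpa using h

lemma toFun_sub' (u v : F) : x.toFun (u - v) = x.toFun u - x.toFun v := by
  have hneg : x.toFun (-v) = - x.toFun v := by
    have h := toFun_smul' x (-1) v
    simpa using h
  rw [sub_eq_add_neg, toFun_add' x, hneg, ← sub_eq_add_neg]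

/-- The adjoint, as an `Adjointable` operator in the reverse direction. -/
def flip : Adjointable A E F where
  toFun := x.adjFun
  adjFun := x.toFun
  adjoint_eq := fun z y => adj_inner x z y

lemma adjFun_sub (u v : E) : x.adjFun (u - v) = x.adjFun u - x.adjFun v :=
  toFun_sub' (flip x) u v

/-- The underlying `ℂ`-linear map of an adjointable operator. -/
def lm : F →ₗ[ℂ] E where
  toFun := x.toFun
  map_add' := toFun_add' x
  map_smul' := toFun_smul' x

lemma cont : Continuous x.toFun := by
  have hgr : ((lm x).graph : Set (F × E)) =
      ⋂ w : E, {p : F × E | (inner A p.2 w : A) = inner A p.1 (x.adjFun w)} := by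
    ext p
    simp only [SetLike.mem_coe, LinearMap.mem_graph_iff, Set.mem_iInter, Set.mem_setOf_eq]
    constructor
    · intro h w
      rw [h]
      exact x.adjoint_eq p.1 w
    · intro h
      have h2 : ∀ w : E, (inner A (p.2 - x.toFun p.1) w : A) = 0 := fun w => by
        rw [CStarModuleOld.inner_sub_left, h w, x.adjoint_eq, sub_self]
      exact sub_eq_zero.mp (ext_l h2)
  have hcl : IsClosed ((lm x).graph : Set (F × E)) := by
    rw [hgr]
    haveI := t2A (A := A)
    refine isClosed_iInter fun w => isClosed_eq ?_ ?_
    · exact CStarModuleOld.continuous_inner.comp (continuous_snd.prodMk continuous_const)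
    · exact CStarModuleOld.continuous_inner.comp (continuous_fst.prodMk continuous_const)
  exact (lm x).continuous_of_isClosed_graph hcl

/-- The adjointable operator as a continuous linear map. -/
def clm : F →L[ℂ] E := ⟨lm x, cont x⟩

@[simp] lemma clm_apply (y : F) : clm x y = x.toFun y := rfl

/-- The operator `1 + x* x`. -/
def bop : F →L[ℂ] F := 1 + (clm (flip x)).comp (clm x)

lemma bop_apply (y : F) : bop x y = y + x.adjFun (x.toFun y) := rfl

lemma inner_bop (y : F) : (inner A (bop x y) y : A) =
    inner A y y + inner A (x.toFun y) (x.toFun y) := by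
  rw [bop_apply, CStarModuleOld.inner_add_left, adj_inner x]

lemma norm_le_bop (y : F) : ‖y‖ ≤ ‖bop x y‖ := by
  rcases eq_or_ne y 0 with rfl | hy
  · simp
  have hle : (inner A y y : A) ≤ inner A (bop x y) y := by
    rw [inner_bop x]
    exact le_add_of_nonneg_right CStarModuleOld.inner_self_nonneg
  have h1 : ‖y‖ ^ 2 ≤ ‖bop x y‖ * ‖y‖ := by
    calc ‖y‖ ^ 2 = ‖(inner A y y : A)‖ := CStarModuleOld.norm_sq_eq
      _ ≤ ‖(inner A (bop x y) y : A)‖ :=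
        CStarAlgebra.norm_le_norm_of_nonneg_of_le CStarModuleOld.inner_self_nonneg hle
      _ ≤ ‖bop x y‖ * ‖y‖ := CStarModuleOld.norm_inner_le F
  have hy' : 0 < ‖y‖ := norm_pos_iff.mpr hy
  nlinarith [h1, hy']

lemma norm_le_bop_im (t : ℝ) (y : F) :
    |t| * ‖y‖ ≤ ‖((t : ℂ) * Complex.I) • y - bop x y‖ := by
  rcases eq_or_ne y 0 with rfl | hy
  · simp
  set c : A := inner A (((t : ℂ) * Complex.I) • y - bop x y) y with hc
  have hc1 : c = star ((t : ℂ) * Complex.I) • (inner A y y : A)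
      - (inner A y y + inner A (x.toFun y) (x.toFun y)) := by
    rw [hc, CStarModuleOld.inner_sub_left, CStarModuleOld.inner_smul_left_complex, inner_bop x]
  have hc2 : star c = ((t : ℂ) * Complex.I) • (inner A y y : A)
      - (inner A y y + inner A (x.toFun y) (x.toFun y)) := by
    rw [hc1]
    simp [star_smul, star_sub, star_add, CStarModuleOld.star_inner]
  have hdiff : c - star c
      = (star ((t : ℂ) * Complex.I) - (t : ℂ) * Complex.I) • (inner A y y : A) := by
    rw [hc2, hc1, sub_smul]
    abel
  have hsc : star ((t : ℂ) * Complex.I) - (t : ℂ) * Complex.I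
      = ((-2 * t : ℝ) : ℂ) * Complex.I := by
    simp only [star_mul', Complex.star_def, Complex.conj_ofReal, Complex.conj_I]
    push_cast
    ring
  have hnorm : ‖c - star c‖ = (2 * |t|) * ‖(inner A y y : A)‖ := by
    rw [hdiff, norm_smul, hsc]
    congr 1
    rw [norm_mul, Complex.norm_I, mul_one, Complex.norm_real]
    norm_num [Real.norm_eq_abs, abs_mul]
  have h1 : (2 * |t|) * ‖(inner A y y : A)‖ ≤ 2 * ‖c‖ := by
    rw [← hnorm]
    calc ‖c - star c‖ ≤ ‖c‖ + ‖star c‖ := norm_sub_le _ _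
      _ = 2 * ‖c‖ := by rw [norm_star]; ring
  have h2 : ‖c‖ ≤ ‖((t : ℂ) * Complex.I) • y - bop x y‖ * ‖y‖ := by
    rw [hc]; exact CStarModuleOld.norm_inner_le F
  have h3 : ‖(inner A y y : A)‖ = ‖y‖ ^ 2 := CStarModuleOld.norm_sq_eq.symm
  have hy' : 0 < ‖y‖ := norm_pos_iff.mpr hy
  nlinarith [h1, h2, h3, hy', abs_nonneg t]

lemma apx {X : Type*} [NormedAddCommGroup X] [NormedSpace ℂ X] [CompleteSpace X]
    (b : X →L[ℂ] X) (lam : ℂ) (c : ℝ) (hc : 0 < c)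
    (hlow : ∀ y : X, c * ‖y‖ ≤ ‖lam • y - b y‖)
    (μ : ℂ) (hμ : μ ∉ spectrum ℂ b) (hdist : ‖μ - lam‖ < c / 2) :
    lam ∉ spectrum ℂ b := by
  rw [spectrum.notMem_iff] at hμ ⊢
  set d := ‖μ - lam‖ with hd
  have hd0 : 0 ≤ d := norm_nonneg _
  have hcd : 0 < c - d := by linarith
  set U := hμ.unit with hU
  set r : X →L[ℂ] X := ↑U⁻¹ with hr
  have hU1 : (U : X →L[ℂ] X) * r = 1 := by rw [hr]; exact U.mul_inv
  have hUr : ∀ z : X, (algebraMap ℂ (X →L[ℂ] X) μ - b) (r z) = z := by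
    intro z
    have h1 : ((U : X →L[ℂ] X) * r) z = z := by rw [hU1]; rfl
    rw [← hμ.unit_spec]
    exact h1
  have hrz : ∀ z : X, ‖r z‖ ≤ ‖z‖ / (c - d) := by
    intro z
    have h2 : lam • (r z) - b (r z) = (lam - μ) • (r z) + z := by
      have h0 := hUr z
      rw [ContinuousLinearMap.sub_apply, Algebra.algebraMap_eq_smul_one,
        ContinuousLinearMap.smul_apply, ContinuousLinearMap.one_apply] at h0
      set w := r z with hw
      rw [← h0, sub_smul]
      abel
    have h3 := hlow (r z)
    rw [h2] at h3
    have hlm : ‖lam - μ‖ = d := by rw [hd, norm_sub_rev]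
    have h4 : ‖(lam - μ) • (r z) + z‖ ≤ d * ‖r z‖ + ‖z‖ := by
      refine (norm_add_le _ _).trans ?_
      have h5 : ‖(lam - μ) • (r z)‖ ≤ d * ‖r z‖ := by
        refine (norm_smul_le _ _).trans ?_
        rw [hlm]
      linarith
    rw [le_div_iff₀ hcd]
    nlinarith [h3, h4]
  have hrnorm : ‖r‖ ≤ (c - d)⁻¹ :=
    r.opNorm_le_bound (by positivity) fun z => by rw [← div_eq_inv_mul]; exact hrz z
  have ht : ‖(μ - lam) • r‖ < 1 := by
    refine lt_of_le_of_lt (ContinuousLinearMap.opNorm_smul_le _ _) ?_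
    have hd' : ‖μ - lam‖ = d := hd.symm
    rw [hd']
    calc d * ‖r‖ ≤ d * (c - d)⁻¹ := mul_le_mul_of_nonneg_left hrnorm hd0
      _ < 1 := by
          rw [← div_eq_mul_inv, div_lt_one hcd]
          linarith
  set V := Units.oneSub ((μ - lam) • r) ht with hV
  have key : algebraMap ℂ (X →L[ℂ] X) lam - b = ↑U * ↑V := by
    rw [hV, Units.val_oneSub, mul_sub, mul_one, mul_smul_comm, hU1, hμ.unit_spec,
      Algebra.algebraMap_eq_smul_one, Algebra.algebraMap_eq_smul_one, sub_smul]
    abel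
  rw [key, ← Units.val_mul]
  exact Units.isUnit _

lemma specIm {X : Type*} [NormedAddCommGroup X] [NormedSpace ℂ X] [CompleteSpace X]
    (b : X →L[ℂ] X)
    (hlow : ∀ (t : ℝ) (y : X), |t| * ‖y‖ ≤ ‖((t : ℂ) * Complex.I) • y - b y‖) :
    ∀ t : ℝ, 0 < t → ((t : ℂ) * Complex.I) ∉ spectrum ℂ b := by
  intro t₀ ht₀ hmem
  set S := {t : ℝ | t₀ ≤ t ∧ ((t : ℂ) * Complex.I) ∈ spectrum ℂ b} with hS
  have hne : S.Nonempty := ⟨t₀, le_refl _, hmem⟩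
  have hbdd : BddAbove S := by
    obtain ⟨R, hR⟩ := (Metric.isBounded_iff_subset_closedBall 0).mp (spectrum.isBounded (𝕜 := ℂ) b)
    refine ⟨R, fun s hs => ?_⟩
    have h1 := hR hs.2
    rw [Metric.mem_closedBall, dist_zero_right, norm_mul, Complex.norm_I, mul_one,
      Complex.norm_real, Real.norm_eq_abs] at h1
    exact (le_abs_self s).trans h1
  have hcl : IsClosed S := by
    have hSeq : S = Set.Ici t₀ ∩ ((fun t : ℝ => ((t : ℂ) * Complex.I)) ⁻¹' (spectrum ℂ b)) := by
      ext s; simp [hS, Set.mem_Ici]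
    rw [hSeq]
    exact isClosed_Ici.inter ((spectrum.isClosed b).preimage (by fun_prop))
  set t₁ := sSup S with ht₁
  have ht₁S : t₁ ∈ S := hcl.csSup_mem hne hbdd
  have ht₁pos : 0 < t₁ := lt_of_lt_of_le ht₀ ht₁S.1
  have hnot : ((t₁ + t₁ / 4 : ℝ) : ℂ) * Complex.I ∉ spectrum ℂ b := by
    intro hmem2
    have hmemS : t₁ + t₁ / 4 ∈ S := ⟨by linarith [ht₁S.1], hmem2⟩
    have hle := le_csSup hbdd hmemS
    rw [← ht₁] at hle
    linarith
  have hdist : ‖(((t₁ + t₁ / 4 : ℝ) : ℂ) * Complex.I) - ((t₁ : ℂ) * Complex.I)‖ < t₁ / 2 := by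
    have heq : (((t₁ + t₁ / 4 : ℝ) : ℂ) * Complex.I) - ((t₁ : ℂ) * Complex.I)
        = ((t₁ / 4 : ℝ) : ℂ) * Complex.I := by push_cast; ring
    rw [heq, norm_mul, Complex.norm_I, mul_one, Complex.norm_real, Real.norm_eq_abs,
      abs_of_pos (show (0:ℝ) < t₁ / 4 by linarith)]
    linarith
  exact apx b ((t₁ : ℂ) * Complex.I) t₁ ht₁pos
    (fun y => by simpa [abs_of_pos ht₁pos] using hlow t₁ y)
    (((t₁ + t₁ / 4 : ℝ) : ℂ) * Complex.I) hnot hdist ht₁S.2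

lemma surj {X : Type*} [NormedAddCommGroup X] [NormedSpace ℂ X] [CompleteSpace X]
    (b : X →L[ℂ] X)
    (hlow0 : ∀ y : X, ‖y‖ ≤ ‖b y‖)
    (hlowIm : ∀ (t : ℝ) (y : X), |t| * ‖y‖ ≤ ‖((t : ℂ) * Complex.I) • y - b y‖) :
    Function.Surjective b := by
  have h4 : (((4 : ℝ)⁻¹ : ℝ) : ℂ) * Complex.I ∉ spectrum ℂ b :=
    specIm b hlowIm _ (by norm_num)
  have hdist : ‖((((4 : ℝ)⁻¹ : ℝ) : ℂ) * Complex.I) - (0 : ℂ)‖ < 1 / 2 := by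
    rw [sub_zero, norm_mul, Complex.norm_I, mul_one, Complex.norm_real, Real.norm_eq_abs,
      show |(4:ℝ)⁻¹| = 4⁻¹ from abs_of_pos (by norm_num)]
    norm_num
  have h0 : (0 : ℂ) ∉ spectrum ℂ b :=
    apx b 0 1 one_pos (fun y => by simpa using hlow0 y) _ h4 hdist
  rw [spectrum.notMem_iff] at h0
  have hzs : algebraMap ℂ (X →L[ℂ] X) 0 - b = -b := by simp
  rw [hzs] at h0
  have hb : IsUnit b := by
    rcases h0 with ⟨v, hv⟩
    exact ⟨-v, by rw [Units.val_neg, hv, neg_neg]⟩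
  obtain ⟨u, hu⟩ := hb
  intro w
  refine ⟨(↑u⁻¹ : X →L[ℂ] X) w, ?_⟩
  calc b ((↑u⁻¹ : X →L[ℂ] X) w) = ((u : X →L[ℂ] X) * ↑u⁻¹) w := by rw [hu]; rfl
    _ = w := by rw [Units.mul_inv]; rfl

lemma bop_surj : ∀ w : F, ∃ y : F, y + x.adjFun (x.toFun y) = w := by
  intro w
  obtain ⟨y, hy⟩ := surj (bop x) (norm_le_bop x) (norm_le_bop_im x) w
  exact ⟨y, hy⟩

end InvAux

open InvAux

/-- If `x ∈ Adj(F, E)` has trivial kernel and its adjoint has trivial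
kernel, then `x⁻¹` (with domain `Range(x)`) is graph regular and `(x⁻¹)* = (x*)⁻¹`. -/
theorem inverse_adjointable_graphRegular (x : Adjointable A F E)
    (hx : ∀ y : F, x.toFun y = 0 → y = 0)
    (hxs : ∀ z : E, x.adjFun z = 0 → z = 0) :
    (∃ u : CStarReg.Unbounded A E F, u.graph = {p : E × F | x.toFun p.2 = p.1}) ∧
    ∀ u : CStarReg.Unbounded A E F, u.graph = {p : E × F | x.toFun p.2 = p.1} →
      u.GraphRegular ∧ adjSet A u.graph = {q : F × E | x.adjFun q.2 = q.1} := by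
  have hsurj := bop_surj x
  constructor
  · refine ⟨⟨{p : E × F | x.toFun p.2 = p.1}, ?_, ?_, ?_, ?_, ?_⟩, rfl⟩
    · exact toFun_zero' x
    · intro p q hp hq
      show x.toFun (p + q).2 = (p + q).1
      rw [Prod.snd_add, Prod.fst_add, toFun_add' x, hp, hq]
    · intro c p hp
      show x.toFun (c • p).2 = (c • p).1
      rw [Prod.smul_snd, Prod.smul_fst, toFun_smul' x, hp]
    · intro a p hp
      show x.toFun (p.2 <• a) = p.1 <• a
      rw [toFun_opsmul' x, hp]
    · intro y h
      exact hx y h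
  · intro u hu
    have hdom : u.dom = {e : E | ∃ f : F, x.toFun f = e} := by
      rw [Unbounded.dom, hu]
      ext e
      constructor
      · rintro ⟨p, hp, rfl⟩
        exact ⟨p.2, hp⟩
      · rintro ⟨f, hf⟩
        exact ⟨(e, f), hf, rfl⟩
    have hess : u.EssentiallyDefined := by
      rw [Unbounded.EssentiallyDefined, IsEssential]
      ext e
      simp only [ortho, Set.mem_setOf_eq, Set.mem_singleton_iff]
      constructor
      · intro h
        have h2 : ∀ f : F, (inner A (x.adjFun e) f : A) = 0 := by
          intro f
          rw [adj_inner x]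
          exact h (x.toFun f) (by rw [hdom]; exact ⟨f, rfl⟩)
        exact hxs e (ext_l h2)
      · rintro rfl
        intro y hy
        exact CStarModuleOld.inner_zero_left
    have horth : ortho A u.graph = {p : E × F | p.2 = - x.adjFun p.1} := by
      rw [hu]
      ext p
      simp only [ortho, Set.mem_setOf_eq]
      constructor
      · intro h
        have h2 : ∀ f : F, (inner A (p.2 + x.adjFun p.1) f : A) = 0 := by
          intro f
          have h3 : (inner A p.1 (x.toFun f) : A) + inner A p.2 f = 0 :=
            h (x.toFun f, f) rfl
          rw [CStarModuleOld.inner_add_left, adj_inner x, add_comm]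
          exact h3
        exact eq_neg_of_add_eq_zero_left (ext_l h2)
      · intro hp q hq
        show (inner A p.1 q.1 : A) + inner A p.2 q.2 = 0
        rw [← hq, hp, CStarModuleOld.inner_neg_left, ← adj_inner x]
        exact add_neg_cancel _
    have hoc : u.OrthoClosed := by
      rw [Unbounded.OrthoClosed, horth, hu]
      ext p
      simp only [ortho, Set.mem_setOf_eq]
      constructor
      · intro h
        have h2 : ∀ e : E, (inner A (p.1 - x.toFun p.2) e : A) = 0 := by
          intro e
          have h3 : (inner A p.1 e : A) + inner A p.2 (- x.adjFun e) = 0 :=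
            h (e, - x.adjFun e) rfl
          rw [CStarModuleOld.inner_neg_right] at h3
          rw [CStarModuleOld.inner_sub_left, x.adjoint_eq, sub_eq_add_neg]
          exact h3
        exact (sub_eq_zero.mp (ext_l h2)).symm
      · intro hp q hq
        show (inner A p.1 q.1 : A) + inner A p.2 q.2 = 0
        rw [hq, ← hp, CStarModuleOld.inner_neg_right, x.adjoint_eq]
        exact add_neg_cancel _
    have hcompl : u.graph + ortho A u.graph = Set.univ := by
      rw [horth, hu]
      ext p
      simp only [Set.mem_univ, iff_true]
      obtain ⟨y, hy⟩ := hsurj (p.2 + x.adjFun p.1)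
      refine Set.mem_add.mpr ⟨(x.toFun y, y), rfl, (p.1 - x.toFun y, p.2 - y), ?_, ?_⟩
      · show p.2 - y = - x.adjFun (p.1 - x.toFun y)
        rw [adjFun_sub x]
        have hadj : x.adjFun (x.toFun y) = p.2 + x.adjFun p.1 - y := by
          rw [← hy]; abel
        rw [hadj]
        abel
      · show (x.toFun y + (p.1 - x.toFun y), y + (p.2 - y)) = p
        have h1 : x.toFun y + (p.1 - x.toFun y) = p.1 := by abel
        have h2 : y + (p.2 - y) = p.2 := by abel
        rw [h1, h2]
    have hadj : adjSet A u.graph = {q : F × E | x.adjFun q.2 = q.1} := by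
      rw [hu]
      ext q
      simp only [adjSet, Set.mem_setOf_eq]
      constructor
      · intro h
        have h2 : ∀ f : F, (inner A f (q.1 - x.adjFun q.2) : A) = 0 := by
          intro f
          have h3 : (inner A f q.1 : A) = inner A (x.toFun f) q.2 :=
            h (x.toFun f, f) rfl
          rw [CStarModuleOld.inner_sub_right, h3, x.adjoint_eq, sub_self]
        have h4 : q.1 - x.adjFun q.2 = 0 := ext_r h2
        exact (sub_eq_zero.mp h4).symm
      · intro hq p hp
        rw [← hp, ← hq]
        exact (x.adjoint_eq p.2 q.2).symm
    exact ⟨⟨hess, hoc, hcompl⟩, hadj⟩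

end Statements
end
end

section
/- Let X be a locally compact Hausdorff space and m : X → ℂ. The multiplication operator t_m on C₀(X) is essentially defined if and only if reg(m) is dense in X. In this case t_m* = t_{conj(m)} (the multiplication operator by the complex conjugate of m) and t_m is orthogonally closed. -/
open scoped RightActions Pointwise

noncomputable section

section CommutativeCase

open CStarReg Unbounded

open scoped ZeroAtInfty

variable {X : Type*} [TopologicalSpace X] [LocallyCompactSpace X] [T2Space X]

/-- The largest open subset of `X` on which `m` is continuous. -/
def reg (m : X → ℂ) : Set X := ⋃₀ {U : Set X | IsOpen U ∧ ContinuousOn m U}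

/-- The set of boundary points of `reg m` near which `m` admits a continuous `ℂ`-valued
extension from `reg m`. -/
def regB (m : X → ℂ) : Set X :=
  {x ∈ frontier (reg m) | ∃ U : Set X, IsOpen U ∧ U ⊆ closure (reg m) ∧ x ∈ U ∧
    ∃ mt : X → ℂ, ContinuousOn mt U ∧ Set.EqOn m mt (U ∩ reg m)}

/-- The set of boundary points of `reg m` near which `m` admits a continuous extension
with values in the Riemann sphere `ℂ ∪ {∞}` taking the value `∞` there. -/
def regInfty (m : X → ℂ) : Set X :=
  {x ∈ frontier (reg m) | ∃ U : Set X, IsOpen U ∧ U ⊆ closure (reg m) ∧ x ∈ U ∧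
    ∃ mt : X → OnePoint ℂ, ContinuousOn mt U ∧
      (∀ y ∈ U ∩ reg m, mt y = (m y : OnePoint ℂ)) ∧ mt x = OnePoint.infty}

/-- The residual singular support `singsuppʳ(m)`. -/
def singSuppR (m : X → ℂ) : Set X := frontier (reg m) \ (regB m ∪ regInfty m)

/-- `h'` is the canonical extension `ĥ` of `h`: it agrees with `h` off `regB h` and with
the (unique) continuous extension of `h` at points of `regB h`. -/
def IsHatOf (h h' : X → ℂ) : Prop :=
  (∀ x ∉ regB h, h' x = h x) ∧
  ∀ x ∈ regB h, ∀ (U : Set X) (mt : X → ℂ), IsOpen U → U ⊆ closure (reg h) → x ∈ U →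
    ContinuousOn mt U → Set.EqOn h mt (U ∩ reg h) → h' x = mt x

/-- `g` is the graph of the multiplication operator `t_m` on `C₀(X)`:
`D(t_m) = {f ∈ C₀(X) | (mf)^ ∈ C₀(X)}` and `t_m f = (mf)^`. -/
def IsMulOpGraph (m : X → ℂ) (g : Set (C₀(X, ℂ) × C₀(X, ℂ))) : Prop :=
  g = {p | IsHatOf (fun x => m x * p.1 x) (fun x => p.2 x)}

section MulOpAux
set_option linter.unusedSectionVars false
set_option linter.unusedVariables false

lemma mulop_isOpen_reg (m : X → ℂ) : IsOpen (reg m) :=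
  isOpen_sUnion fun _ hU => hU.1

lemma mulop_subset_reg {m : X → ℂ} {U : Set X} (hU : IsOpen U) (hc : ContinuousOn m U) :
    U ⊆ reg m := fun x hx => ⟨U, ⟨hU, hc⟩, hx⟩

lemma mulop_continuousOn_reg (m : X → ℂ) : ContinuousOn m (reg m) := by
  intro x hx
  obtain ⟨U, ⟨hUo, hUc⟩, hxU⟩ := hx
  exact (hUc.continuousAt (hUo.mem_nhds hxU)).continuousWithinAt

lemma mulop_reg_conj_subset (m : X → ℂ) :
    reg m ⊆ reg fun x => (starRingEnd ℂ) (m x) :=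
  mulop_subset_reg (mulop_isOpen_reg m)
    (Complex.continuous_conj.comp_continuousOn (mulop_continuousOn_reg m))

lemma mulop_reg_conj (m : X → ℂ) : reg (fun x => (starRingEnd ℂ) (m x)) = reg m := by
  refine subset_antisymm ?_ (mulop_reg_conj_subset m)
  have := mulop_reg_conj_subset (fun x => (starRingEnd ℂ) (m x))
  simpa [Complex.conj_conj] using this

lemma mulop_eqAt_of_continuousAt {f g : X → ℂ} {s : Set X} {x : X}
    (hf : ContinuousAt f x) (hg : ContinuousAt g x) (h : Set.EqOn f g s)
    (hx : x ∈ closure s) : f x = g x := by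
  have hne : (nhdsWithin x s).NeBot := mem_closure_iff_nhdsWithin_neBot.mp hx
  have h1 : Filter.Tendsto f (nhdsWithin x s) (nhds (f x)) := hf.continuousWithinAt
  have h2 : Filter.Tendsto f (nhdsWithin x s) (nhds (g x)) := by
    refine Filter.Tendsto.congr' ?_ hg.continuousWithinAt
    exact Filter.eventually_of_mem self_mem_nhdsWithin fun y hy => (h hy).symm
  exact tendsto_nhds_unique h1 h2

lemma mulop_continuousOn_of_mul {m f : X → ℂ} {s : Set X}
    (hf : Continuous f) (hmf : ContinuousOn (fun y => m y * f y) s)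
    (hne : ∀ y ∈ s, f y ≠ 0) : ContinuousOn m s := by
  have h1 : ContinuousOn (fun y => m y * f y * (f y)⁻¹) s :=
    hmf.mul (hf.continuousOn.inv₀ hne)
  refine h1.congr fun y hy => ?_
  exact (mul_inv_cancel_right₀ (hne y hy) (m y)).symm

lemma mulop_isHatOf_of_continuous {h h' : X → ℂ} (hc : Continuous h)
    (he : ∀ x, h' x = h x) : IsHatOf h h' := by
  have hreg : reg h = Set.univ :=
    le_antisymm (Set.subset_univ _) (mulop_subset_reg isOpen_univ hc.continuousOn)
  refine ⟨fun x _ => he x, fun x hx => ?_⟩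
  exact absurd hx.1 (by rw [hreg, frontier_univ]; exact Set.notMem_empty x)

lemma mulop_exists_c0_mul {c : X → ℂ} {V : Set X}
    (hV : IsOpen V) (hc : ContinuousOn c V)
    {f : C₀(X, ℂ)} (hsupp : tsupport (⇑f) ⊆ V) (hcs : HasCompactSupport (⇑f)) :
    ∃ g : C₀(X, ℂ), ∀ y, g y = c y * f y := by
  have hcont : Continuous fun y => c y * f y := by
    rw [continuous_iff_continuousAt]
    intro y
    by_cases hy : y ∈ V
    · exact (hc.continuousAt (hV.mem_nhds hy)).mul (map_continuous f).continuousAt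
    · have hmem : (tsupport (⇑f))ᶜ ∈ nhds y :=
        (isClosed_tsupport _).isOpen_compl.mem_nhds fun hz => hy (hsupp hz)
      have heq : (fun z => c z * f z) =ᶠ[nhds y] fun _ => (0 : ℂ) :=
        Filter.eventually_of_mem hmem fun z hz => by
          simp [image_eq_zero_of_notMem_tsupport hz]
      exact continuousAt_const.congr heq.symm
  have hsub : Function.support (fun y => c y * f y) ⊆ Function.support (⇑f) := by
    intro y hy
    simp only [Function.mem_support] at hy ⊢
    intro h0; exact hy (by rw [h0, mul_zero])
  have hcs2 : HasCompactSupport fun y => c y * f y :=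
    hcs.of_isClosed_subset (isClosed_tsupport _) (closure_mono hsub)
  exact ⟨⟨⟨_, hcont⟩, hcs2.is_zero_at_infty⟩, fun y => rfl⟩

lemma mulop_exists_bump {U : Set X} (hU : IsOpen U) {x : X} (hx : x ∈ U) :
    ∃ f : C₀(X, ℂ), f x = 1 ∧ HasCompactSupport (⇑f) ∧ tsupport (⇑f) ⊆ U := by
  obtain ⟨K, hKc, hxK, hKU⟩ := exists_compact_subset hU hx
  obtain ⟨φ, hφ1, hφ0, hφcs, -⟩ :=
    exists_continuous_one_zero_of_isCompact ((isCompact_singleton : IsCompact {x}))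
      isOpen_interior.isClosed_compl
      (by rw [Set.disjoint_left]
          intro y hy hyc
          rw [Set.mem_singleton_iff] at hy
          subst hy
          exact hyc hxK)
  set f0 : X → ℂ := fun y => (φ y : ℂ) with hf0
  have hcont : Continuous f0 := Complex.continuous_ofReal.comp (map_continuous φ)
  have hsupp0 : Function.support f0 ⊆ interior K := by
    intro y hy
    by_contra hyK
    refine hy ?_
    have := hφ0 hyK
    replace this : φ y = 0 := this
    simp [hf0, this]
  have hts' : tsupport f0 ⊆ K :=
    (closure_mono hsupp0).trans (closure_minimal interior_subset hKc.isClosed)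
  have hcs : HasCompactSupport f0 := hKc.of_isClosed_subset (isClosed_tsupport _) hts'
  refine ⟨⟨⟨f0, hcont⟩, hcs.is_zero_at_infty⟩, ?_, hcs, hts'.trans hKU⟩
  have := hφ1 (Set.mem_singleton x)
  replace this : φ x = 1 := this
  show f0 x = 1
  simp [hf0, this]

lemma mulop_vanish_of_isHatOf {m f₁ f₂ : X → ℂ} (hf₁ : Continuous f₁) (hf₂ : Continuous f₂)
    (H : IsHatOf (fun y => m y * f₁ y) f₂) :
    ∀ x ∉ closure (reg m), f₁ x = 0 := by
  intro x hx
  by_contra hfx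
  set h : X → ℂ := fun y => m y * f₁ y with hh
  set W : Set X := {y | f₁ y ≠ 0} ∩ (closure (reg m))ᶜ with hWdef
  have hWo : IsOpen W := by
    refine IsOpen.inter ?_ isClosed_closure.isOpen_compl
    have : {y | f₁ y ≠ 0} = f₁ ⁻¹' ({0}ᶜ) := rfl
    rw [this]
    exact isOpen_compl_singleton.preimage hf₁
  have hxW : x ∈ W := ⟨hfx, hx⟩
  have hWreg : ∀ y ∈ W, y ∉ reg m := fun y hy hreg => hy.2 (subset_closure hreg)
  have h1 : ∀ y ∈ W, y ∉ reg h := by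
    intro y hyW hyh
    have hsub : W ∩ reg h ⊆ reg m :=
      mulop_subset_reg (hWo.inter (mulop_isOpen_reg h))
        (mulop_continuousOn_of_mul hf₁
          ((mulop_continuousOn_reg h).mono Set.inter_subset_right)
          (fun z hz => hz.1.1))
    exact hWreg y hyW (hsub ⟨hyW, hyh⟩)
  have h2 : ∀ y ∈ W, y ∉ regB h := by
    intro y hyW hyB
    obtain ⟨z, hzW, hzh⟩ := mem_closure_iff.mp (frontier_subset_closure hyB.1) W hWo hyW
    exact h1 z hzW hzh
  have h3 : ContinuousOn h W :=
    hf₂.continuousOn.congr fun y hy => (H.1 y (h2 y hy)).symm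
  have h4 : ContinuousOn m W := mulop_continuousOn_of_mul hf₁ h3 fun y hy => hy.1
  exact hWreg x hxW (mulop_subset_reg hWo h4 hxW)

lemma mulop_isHatOf_iff_of_dense {m g₁ g₂ : X → ℂ} (hm : Dense (reg m))
    (hg₁ : Continuous g₁) (hg₂ : Continuous g₂) :
    IsHatOf (fun x => m x * g₁ x) g₂ ↔ ∀ x ∈ reg m, g₂ x = m x * g₁ x := by
  set h : X → ℂ := fun x => m x * g₁ x with hh
  have hsub : reg m ⊆ reg h :=
    mulop_subset_reg (mulop_isOpen_reg m) ((mulop_continuousOn_reg m).mul hg₁.continuousOn)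
  have hdh : Dense (reg h) := hm.mono hsub
  constructor
  · intro H x hx
    have hxh : x ∈ reg h := hsub hx
    have hnB : x ∉ regB h := fun hB => ((mulop_isOpen_reg h).frontier_eq ▸ hB.1).2 hxh
    exact H.1 x hnB
  · intro H
    have key : ∀ x ∈ reg h, g₂ x = h x := by
      intro x hx
      exact mulop_eqAt_of_continuousAt hg₂.continuousAt
        ((mulop_continuousOn_reg h).continuousAt ((mulop_isOpen_reg h).mem_nhds hx))
        (fun y hy => H y hy) (hm x)
    constructor
    · intro x hxB
      by_cases hx : x ∈ reg h
      · exact key x hx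
      · refine absurd ?_ hxB
        refine ⟨?_, Set.univ, isOpen_univ, fun y _ => hdh y, trivial, g₂,
          hg₂.continuousOn, fun y hy => (key y hy.2).symm⟩
        rw [(mulop_isOpen_reg h).frontier_eq]
        exact ⟨hdh x, hx⟩
    · intro x hxB U mt hUo hUsub hxU hmt heq
      have hxcl : x ∈ closure (U ∩ reg h) := by
        rw [mem_closure_iff]
        intro o ho hxo
        obtain ⟨y, ⟨hyo, hyU⟩, hyr⟩ :=
          mem_closure_iff.mp (hdh x) (o ∩ U) (ho.inter hUo) ⟨hxo, hxU⟩
        exact ⟨y, hyo, hyU, hyr⟩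
      exact mulop_eqAt_of_continuousAt hg₂.continuousAt (hmt.continuousAt (hUo.mem_nhds hxU))
        (fun y hy => (key y hy.2).trans (heq hy)) hxcl

lemma mulop_apply_mul (f g : C₀(X, ℂ)) (y : X) : (f * g) y = f y * g y := rfl
lemma mulop_apply_add (f g : C₀(X, ℂ)) (y : X) : (f + g) y = f y + g y := rfl
lemma mulop_apply_star (f : C₀(X, ℂ)) (y : X) : (star f) y = star (f y) := rfl
lemma mulop_apply_zero (y : X) : (0 : C₀(X, ℂ)) y = 0 := rfl

end MulOpAux

variable [PartialOrder C₀(X, ℂ)] [StarOrderedRing C₀(X, ℂ)]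

/-- The multiplication operator `t_m` on `C₀(X)` is essentially defined
if and only if `reg(m)` is dense in `X`; in this case `t_m* = t_{conj m}` and `t_m` is
orthogonally closed. -/
theorem mulOp_essentiallyDefined_iff (m : X → ℂ)
    (t : CStarReg.Unbounded C₀(X, ℂ) C₀(X, ℂ) C₀(X, ℂ)) (htm : IsMulOpGraph m t.graph) :
    (∃ s : CStarReg.Unbounded C₀(X, ℂ) C₀(X, ℂ) C₀(X, ℂ), IsMulOpGraph m s.graph) ∧
    (t.EssentiallyDefined ↔ Dense (reg m)) ∧
    (Dense (reg m) →
      IsMulOpGraph (fun x => (starRingEnd ℂ) (m x)) (adjSet C₀(X, ℂ) t.graph) ∧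
      t.OrthoClosed) := by
  have hbump : ∀ x ∈ reg m, ∃ f g : C₀(X, ℂ),
      f x = 1 ∧ (∀ y, g y = m y * f y) ∧ (f, g) ∈ t.graph := by
    intro x hx
    obtain ⟨f, hf1, hfcs, hfsupp⟩ := mulop_exists_bump (mulop_isOpen_reg m) hx
    obtain ⟨g, hg⟩ :=
      mulop_exists_c0_mul (mulop_isOpen_reg m) (mulop_continuousOn_reg m) hfsupp hfcs
    have hgc : ⇑g = fun y => m y * f y := funext hg
    have hco : Continuous fun y => m y * f y := by rw [← hgc]; exact map_continuous g
    refine ⟨f, g, hf1, hg, ?_⟩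
    rw [htm]
    exact mulop_isHatOf_of_continuous hco hg
  refine ⟨⟨t, htm⟩, ⟨?_, ?_⟩, ?_⟩
  · -- essentially defined → dense
    intro hess
    by_contra hnd
    simp only [Dense] at hnd
    push_neg at hnd
    obtain ⟨x, hx⟩ := hnd
    obtain ⟨φ, hφ1, hφcs, hφsupp⟩ :=
      mulop_exists_bump isClosed_closure.isOpen_compl
        (show x ∈ (closure (reg m))ᶜ from hx)
    have hφmem : φ ∈ ortho C₀(X, ℂ) t.dom := by
      intro f hf
      obtain ⟨p, hp, rfl⟩ := hf
      have hp' : IsHatOf (fun y => m y * p.1 y) (fun y => p.2 y) := by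
        rw [htm] at hp; exact hp
      have hv := mulop_vanish_of_isHatOf (map_continuous p.1) (map_continuous p.2) hp'
      show p.1 * star φ = 0
      rw [mul_comm]
      refine ZeroAtInftyContinuousMap.ext fun y => ?_
      rw [mulop_apply_mul, mulop_apply_star, mulop_apply_zero]
      by_cases hy : y ∈ closure (reg m)
      · have hz : φ y = 0 := image_eq_zero_of_notMem_tsupport fun hmem => (hφsupp hmem) hy
        rw [hz, star_zero, zero_mul]
      · rw [hv y hy, mul_zero]
    have hφ0 : φ = 0 := by
      have hess' : ortho C₀(X, ℂ) t.dom = {0} := hess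
      have h0 : φ ∈ ({0} : Set C₀(X, ℂ)) := hess' ▸ hφmem
      simpa using h0
    rw [hφ0] at hφ1
    rw [mulop_apply_zero] at hφ1
    exact zero_ne_one hφ1
  · -- dense → essentially defined
    intro hm
    show ortho C₀(X, ℂ) t.dom = {0}
    refine Set.eq_singleton_iff_unique_mem.mpr ⟨?_, ?_⟩
    · intro f _
      show f * star (0 : C₀(X, ℂ)) = 0
      rw [mul_comm]
      refine ZeroAtInftyContinuousMap.ext fun y => ?_
      simp [mulop_apply_mul, mulop_apply_star, mulop_apply_zero]
    · intro ψ hψ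
      have hz : ∀ y ∈ reg m, ψ y = 0 := by
        intro y hy
        obtain ⟨f, g, hf1, hg, hmem⟩ := hbump y hy
        have hdom : f ∈ t.dom := ⟨(f, g), hmem, rfl⟩
        have h0 : star ψ * f = 0 := by rw [mul_comm]; exact hψ f hdom
        have h0y : (star ψ * f) y = (0 : C₀(X, ℂ)) y := by rw [h0]
        rw [mulop_apply_mul, mulop_apply_star, mulop_apply_zero, hf1, mul_one] at h0y
        exact star_eq_zero.mp h0y
      have hfun : ⇑ψ = fun _ => (0 : ℂ) :=
        Continuous.ext_on hm (map_continuous ψ) continuous_const fun y hy => hz y hy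
      refine ZeroAtInftyContinuousMap.ext fun y => ?_
      rw [mulop_apply_zero]
      exact congrFun hfun y
  · -- the dense case : adjoint and orthogonal closedness
    intro hm
    have hmc : Dense (reg fun x => (starRingEnd ℂ) (m x)) := by
      rw [mulop_reg_conj]; exact hm
    have hGiff : ∀ p : C₀(X, ℂ) × C₀(X, ℂ),
        p ∈ t.graph ↔ ∀ x ∈ reg m, p.2 x = m x * p.1 x := by
      intro p
      rw [htm]
      exact mulop_isHatOf_iff_of_dense hm (map_continuous p.1) (map_continuous p.2)
    constructor
    · -- adjoint is multiplication by the conjugate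
      show adjSet C₀(X, ℂ) t.graph =
        {p : C₀(X, ℂ) × C₀(X, ℂ) |
          IsHatOf (fun x => (starRingEnd ℂ) (m x) * p.1 x) (fun x => p.2 x)}
      ext p
      simp only [adjSet, Set.mem_setOf_eq]
      constructor
      · intro hp
        refine (mulop_isHatOf_iff_of_dense hmc (map_continuous p.1)
          (map_continuous p.2)).mpr ?_
        rw [mulop_reg_conj]
        intro x hx
        obtain ⟨f, g, hf1, hg, hmem⟩ := hbump x hx
        have h1 : (star g * p.1 : C₀(X, ℂ)) = star f * p.2 := by
          rw [mul_comm, mul_comm (star f)]; exact hp (f, g) hmem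
        have h2 : (star g * p.1 : C₀(X, ℂ)) x = (star f * p.2) x := by rw [h1]
        rw [mulop_apply_mul, mulop_apply_mul, mulop_apply_star, mulop_apply_star,
          hg x, hf1, mul_one, star_one, one_mul] at h2
        rw [← h2, starRingEnd_apply]
      · intro hp
        have hp' : ∀ x ∈ reg m, (p.2 : X → ℂ) x = (starRingEnd ℂ) (m x) * p.1 x := by
          have h := (mulop_isHatOf_iff_of_dense hmc (map_continuous p.1)
            (map_continuous p.2)).mp hp
          rw [mulop_reg_conj] at h
          exact h
        intro q hq
        have hq' := (hGiff q).mp hq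
        show (p.1 * star q.2 : C₀(X, ℂ)) = p.2 * star q.1
        rw [mul_comm, mul_comm p.2]
        refine DFunLike.coe_injective ?_
        refine Continuous.ext_on hm (map_continuous _) (map_continuous _) fun y hy => ?_
        show (star q.2 * p.1) y = (star q.1 * p.2) y
        rw [mulop_apply_mul, mulop_apply_mul, mulop_apply_star, mulop_apply_star,
          hq' y hy, hp' y hy, starRingEnd_apply]
        rw [star_mul']
        ring
    · -- orthogonally closed
      show ortho C₀(X, ℂ) (ortho C₀(X, ℂ) t.graph) = t.graph
      refine subset_antisymm ?_ ?_
      · intro p hp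
        refine (hGiff p).mpr ?_
        intro x hx
        obtain ⟨f, hf1, hfcs, hfsupp⟩ := mulop_exists_bump (mulop_isOpen_reg m) hx
        have hcm : ContinuousOn (fun y => -((starRingEnd ℂ) (m y))) (reg m) :=
          (Complex.continuous_conj.comp_continuousOn (mulop_continuousOn_reg m)).neg
        obtain ⟨u, hu⟩ := mulop_exists_c0_mul (mulop_isOpen_reg m) hcm hfsupp hfcs
        have hmemo : (u, f) ∈ ortho C₀(X, ℂ) t.graph := by
          intro q hq
          have hq' := (hGiff q).mp hq
          show (q.1 * star u + q.2 * star f : C₀(X, ℂ)) = 0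
          rw [mul_comm q.1, mul_comm q.2]
          refine ZeroAtInftyContinuousMap.ext ?_
          have := Continuous.ext_on hm
            (map_continuous (star u * q.1 + star f * q.2 : C₀(X, ℂ)))
            (map_continuous (0 : C₀(X, ℂ))) (fun y hy => ?_)
          · exact fun y => congrFun this y
          show (star u * q.1 + star f * q.2) y = (0 : C₀(X, ℂ)) y
          rw [mulop_apply_add, mulop_apply_mul, mulop_apply_mul, mulop_apply_star,
            mulop_apply_star, mulop_apply_zero, hu y, hq' y hy, starRingEnd_apply,
            star_mul', star_neg, star_star]
          ring
        have h0 : (star p.1 * u + star p.2 * f : C₀(X, ℂ)) = 0 := by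
          rw [mul_comm (star p.1), mul_comm (star p.2)]; exact hp (u, f) hmemo
        have h0x : star (p.1 x) * u x + star (p.2 x) * f x = 0 := by
          have h0' : (star p.1 * u + star p.2 * f : C₀(X, ℂ)) x = (0 : C₀(X, ℂ)) x := by
            rw [h0]
          rw [mulop_apply_add, mulop_apply_mul, mulop_apply_mul, mulop_apply_star,
            mulop_apply_star, mulop_apply_zero] at h0'
          exact h0'
        rw [hu x, hf1, mul_one, mul_one] at h0x
        have hst : star (p.2 x) = star (m x * p.1 x) := by
          simp only [starRingEnd_apply] at h0x
          rw [star_mul']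
          linear_combination h0x
        exact star_injective hst
      · intro p hp q hq
        have h1 : (star q.1 * p.1 + star q.2 * p.2 : C₀(X, ℂ)) = 0 := by
          rw [mul_comm (star q.1), mul_comm (star q.2)]; exact hq p hp
        show (q.1 * star p.1 + q.2 * star p.2 : C₀(X, ℂ)) = 0
        rw [mul_comm q.1, mul_comm q.2]
        have h2 := congrArg star h1
        simpa [star_add, star_mul, star_star, add_comm, mul_comm] using h2

end CommutativeCase
end
end
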